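/- arXiv:1905.10354 — 4 statements merged into one kernel-verified Lean document; each statement's English description precedes it below -/
import Mathlib

section
/- For positive integers n, q and p_1, …, p_q with p = Σ_{i=1}^q p_i < n, define σ_{n,q}^2 = 2 log( Π_{i=1}^q (1 − p_i/n) / (1 − p/n) ). If q_n → ∞, p_i/n → λ_i ∈ (0,1) for each fixed i, p/n → c < 1, and Σ_{i=1}^∞ λ_i = c, then σ_{n−1, q_n}^2 → σ^2 := 2 log((1−c)^{−1} Π_{i=1}^∞ (1 − λ_i)) as n → ∞. -/
open MeasureTheory Filter Finset
open scoped Topology BigOperators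

lemma sum_Icc_one_eq_range (h : ℕ → ℝ) (K : ℕ) :
    ∑ i ∈ Finset.Icc 1 K, h i = ∑ j ∈ Finset.range K, h (j + 1) := by
  induction K with
  | zero => simp
  | succ K ih =>
      rw [Finset.sum_Icc_succ_top (Nat.succ_le_succ (Nat.zero_le K)), ih,
        Finset.sum_range_succ]

lemma Icc_one_eq_Ioc_zero (m : ℕ) : Finset.Icc 1 m = Finset.Ioc 0 m := by
  ext i
  simp only [Finset.mem_Icc, Finset.mem_Ioc]
  omega

lemma abs_log_one_sub_le {c' x : ℝ} (hc' : c' < 1) (hx0 : 0 ≤ x) (hx : x ≤ c') :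
    |Real.log (1 - x)| ≤ x * (1 - c')⁻¹ := by
  have h1x : 0 < 1 - x := by linarith
  have h1c : 0 < 1 - c' := by linarith
  have hlog := Real.log_le_sub_one_of_pos (inv_pos.mpr h1x)
  rw [Real.log_inv] at hlog
  have habs : |Real.log (1 - x)| = -Real.log (1 - x) :=
    abs_of_nonpos (Real.log_nonpos (by linarith) (by linarith))
  rw [habs]
  have h2 : (1 - x)⁻¹ - 1 = x * (1 - x)⁻¹ := by
    field_simp
    ring
  have hinv : (1 - x)⁻¹ ≤ (1 - c')⁻¹ := by
    apply inv_anti₀ h1c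
    linarith
  have h3 : x * (1 - x)⁻¹ ≤ x * (1 - c')⁻¹ :=
    mul_le_mul_of_nonneg_left hinv hx0
  linarith

lemma tendsto_div_sub_one {a : ℕ → ℝ} {l : ℝ}
    (h : Tendsto (fun n => a n / n) atTop (𝓝 l)) :
    Tendsto (fun n => a n / ((n : ℝ) - 1)) atTop (𝓝 l) := by
  have hA : Tendsto (fun n : ℕ => ((n : ℝ) - 1)) atTop atTop :=
    tendsto_atTop_add_const_right _ (-1) (tendsto_natCast_atTop_atTop (R := ℝ))
  have hB : Tendsto (fun n : ℕ => ((n : ℝ) - 1)⁻¹) atTop (𝓝 0) :=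
    hA.inv_tendsto_atTop
  have hinv : Tendsto (fun n : ℕ => (n : ℝ) / ((n : ℝ) - 1)) atTop (𝓝 1) := by
    have h1 : Tendsto (fun n : ℕ => 1 + ((n : ℝ) - 1)⁻¹) atTop (𝓝 1) := by
      simpa using (tendsto_const_nhds (x := (1:ℝ))).add hB
    refine h1.congr' ?_
    filter_upwards [eventually_ge_atTop 2] with n hn
    have hn1 : ((n : ℝ) - 1) ≠ 0 := by
      have : (2 : ℝ) ≤ (n : ℝ) := by exact_mod_cast hn
      linarith
    field_simp
    ring
  have hmul := h.mul hinv
  rw [mul_one] at hmul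
  refine hmul.congr' ?_
  filter_upwards [eventually_ge_atTop 2] with n hn
  have hn0 : (n : ℝ) ≠ 0 := by
    have : (2 : ℝ) ≤ (n : ℝ) := by exact_mod_cast hn
    linarith
  field_simp

/-- With `σ_{n,q}² = 2 log( ∏_{i=1}^q (1 − p_i/n) / (1 − p/n) )`, the sequence
`σ_{n−1,q_n}²` converges to `σ² = 2 log((1−c)⁻¹ ∏_{i=1}^∞ (1 − λ_i))`. -/
theorem sigma_nq_limit
    (q : ℕ → ℕ) (p : ℕ → ℕ → ℕ) (lam : ℕ → ℝ) (c : ℝ)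
    (hpos : ∀ n, ∀ i ∈ Finset.Icc 1 (q n), 0 < p n i)
    -- p = ∑_{i=1}^{q_n} p_i < n − 1 (eventually), so that σ²_{n−1,q_n} is well defined
    (hnp : ∀ᶠ n in atTop, (∑ i ∈ Finset.Icc 1 (q n), p n i) < n - 1)
    (hq : Tendsto q atTop atTop)
    (hlam : ∀ i, 1 ≤ i → lam i ∈ Set.Ioo (0 : ℝ) 1)
    (hpl : ∀ i, 1 ≤ i → Tendsto (fun n => (p n i : ℝ) / n) atTop (𝓝 (lam i)))
    (hc : c < 1)
    (hpn : Tendsto (fun n => ((∑ i ∈ Finset.Icc 1 (q n), p n i : ℕ) : ℝ) / n)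
      atTop (𝓝 c))
    (hsum : HasSum (fun i : ℕ => lam (i + 1)) c) :
    Tendsto (fun n =>
        2 * Real.log ((∏ i ∈ Finset.Icc 1 (q n), (1 - (p n i : ℝ) / ((n : ℝ) - 1)))
          / (1 - ((∑ i ∈ Finset.Icc 1 (q n), p n i : ℕ) : ℝ) / ((n : ℝ) - 1))))
      atTop (𝓝 (2 * Real.log ((1 - c)⁻¹ * ∏' i : ℕ, (1 - lam (i + 1))))) := by
  -- basic positivity facts
  have hc0 : 0 ≤ c := hsum.nonneg fun i => (hlam (i + 1) (Nat.le_add_left 1 i)).1.le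
  set c' : ℝ := (1 + c) / 2 with hc'def
  have hcc' : c < c' := by rw [hc'def]; linarith
  have hc'1 : c' < 1 := by rw [hc'def]; linarith
  set L : ℝ := (1 - c')⁻¹ with hLdef
  have hL0 : 0 < L := by rw [hLdef]; exact inv_pos.mpr (by linarith)
  have hlam_le : ∀ i, lam (i + 1) ≤ c := fun i =>
    le_hasSum hsum i fun j _ => (hlam (j + 1) (Nat.le_add_left 1 j)).1.le
  have hlam_pos : ∀ i, 0 < lam (i + 1) := fun i => (hlam (i + 1) (Nat.le_add_left 1 i)).1
  have hlam_lt1 : ∀ i, lam (i + 1) < 1 := fun i => (hlam (i + 1) (Nat.le_add_left 1 i)).2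
  -- the log series
  set f : ℕ → ℝ := fun j => Real.log (1 - lam (j + 1)) with hfdef
  have hf_bound : ∀ j, |f j| ≤ lam (j + 1) * L := fun j =>
    abs_log_one_sub_le hc'1 (hlam_pos j).le (le_trans (hlam_le j) hcc'.le)
  have hf_summable : Summable f :=
    Summable.of_norm_bounded (hsum.summable.mul_right L)
      (fun j => by simpa [Real.norm_eq_abs] using hf_bound j)
  set S : ℝ := ∑' j, f j with hSdef
  -- rewrite the limit point
  have h1c : (0:ℝ) < 1 - c := by linarith
  have hprod : (∏' i : ℕ, (1 - lam (i + 1))) = Real.exp S := by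
    have h := Real.rexp_tsum_eq_tprod (f := fun i => 1 - lam (i + 1))
      (fun i => sub_pos.mpr (hlam_lt1 i)) hf_summable
    exact h.symm
  have hRHS : Real.log ((1 - c)⁻¹ * ∏' i : ℕ, (1 - lam (i + 1)))
      = S - Real.log (1 - c) := by
    rw [hprod, Real.log_mul (inv_ne_zero h1c.ne') (Real.exp_ne_zero S),
      Real.log_inv, Real.log_exp]
    ring
  rw [hRHS]
  -- normalized quantities
  set x : ℕ → ℕ → ℝ := fun n i => (p n i : ℝ) / ((n : ℝ) - 1) with hxdef
  set t : ℕ → ℝ := fun n => ((∑ i ∈ Finset.Icc 1 (q n), p n i : ℕ) : ℝ) / ((n : ℝ) - 1)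
    with htdef
  have ht : Tendsto t atTop (𝓝 c) := tendsto_div_sub_one hpn
  have hxi : ∀ i, 1 ≤ i → Tendsto (fun n => x n i) atTop (𝓝 (lam i)) :=
    fun i hi => tendsto_div_sub_one (hpl i hi)
  have htx : ∀ n, t n = ∑ i ∈ Finset.Icc 1 (q n), x n i := by
    intro n
    rw [htdef, hxdef]
    push_cast
    rw [Finset.sum_div]
  -- Step B : convergence of the sums of logs
  have hS : Tendsto (fun n => ∑ i ∈ Finset.Icc 1 (q n), Real.log (1 - x n i))
      atTop (𝓝 S) := by
    rw [Metric.tendsto_atTop]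
    intro ε hε
    set δ : ℝ := ε / (8 * L) with hδdef
    have hδ0 : 0 < δ := by positivity
    have hδL : δ * L = ε / 8 := by
      rw [hδdef]; field_simp
    -- choose K
    have hps : Tendsto (fun K => ∑ j ∈ Finset.range K, lam (j + 1)) atTop (𝓝 c) :=
      hsum.tendsto_sum_nat
    obtain ⟨K, hK⟩ := Metric.tendsto_atTop.mp hps δ hδ0
    have hKδ : |(∑ j ∈ Finset.range K, lam (j + 1)) - c| < δ := by
      simpa [Real.dist_eq] using hK K le_rfl
    set par : ℝ := ∑ j ∈ Finset.range K, lam (j + 1) with hpardef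
    set TK : ℝ := ∑' j, lam (j + K + 1) with hTKdef
    have hsplitc : par + TK = c := by
      have h := Summable.sum_add_tsum_nat_add (f := fun j => lam (j + 1)) K hsum.summable
      rw [hsum.tsum_eq] at h
      simpa [hpardef, hTKdef, add_right_comm] using h
    have hTK0 : 0 ≤ TK := tsum_nonneg fun j => (hlam_pos (j + K)).le
    have hTKδ : TK ≤ δ := by
      rw [abs_lt] at hKδ
      linarith [hKδ.1, hKδ.2]
    -- tail of S bound
    have hsplitS : (∑ j ∈ Finset.range K, f j) + ∑' j, f (j + K) = S :=
      Summable.sum_add_tsum_nat_add K hf_summable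
    have htail_sum : Summable fun j => f (j + K) := (summable_nat_add_iff K).mpr hf_summable
    have htailS : |∑' j, f (j + K)| ≤ TK * L := by
      calc |∑' j, f (j + K)| ≤ ∑' j, |f (j + K)| := by
            simpa [Real.norm_eq_abs] using
              norm_tsum_le_tsum_norm (f := fun j => f (j + K))
                (by simpa [Real.norm_eq_abs] using htail_sum.abs)
        _ ≤ ∑' j, lam (j + K + 1) * L := by
            refine Summable.tsum_le_tsum (fun j => ?_) htail_sum.abs
              (((summable_nat_add_iff K).mpr hsum.summable).mul_right L)
            simpa [add_right_comm] using hf_bound (j + K)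
        _ = TK * L := by rw [hTKdef, tsum_mul_right]
    -- head convergence
    have hhead : Tendsto
        (fun n => ∑ i ∈ Finset.Icc 1 K, (Real.log (1 - x n i) - Real.log (1 - lam i)))
        atTop (𝓝 0) := by
      have h0 : (0:ℝ) = ∑ _i ∈ Finset.Icc 1 K, (0:ℝ) := by simp
      rw [h0]
      refine tendsto_finset_sum _ fun i hi => ?_
      have hi1 : 1 ≤ i := (Finset.mem_Icc.mp hi).1
      have hlog : Tendsto (fun n => Real.log (1 - x n i)) atTop
          (𝓝 (Real.log (1 - lam i))) := by
        apply Filter.Tendsto.log (tendsto_const_nhds.sub (hxi i hi1))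
        have := (hlam i hi1).2
        intro h
        rw [sub_eq_zero] at h
        linarith
      simpa using hlog.sub (tendsto_const_nhds (x := Real.log (1 - lam i)))
    -- partial sums of x over Icc 1 K converge to par
    have hParn : Tendsto (fun n => ∑ i ∈ Finset.Icc 1 K, x n i) atTop (𝓝 par) := by
      have hpar2 : par = ∑ i ∈ Finset.Icc 1 K, lam i := by
        rw [hpardef, sum_Icc_one_eq_range (fun i => lam i) K]
      rw [hpar2]
      exact tendsto_finset_sum _ fun i hi => hxi i (Finset.mem_Icc.mp hi).1
    -- combine eventualities
    have hev : ∀ᶠ n in atTop,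
        dist (∑ i ∈ Finset.Icc 1 (q n), Real.log (1 - x n i)) S < ε := by
      filter_upwards [hq.eventually_ge_atTop K,
        Metric.tendsto_nhds.mp hhead (ε/4) (by positivity),
        Metric.tendsto_nhds.mp hParn δ hδ0,
        Metric.tendsto_nhds.mp ht δ hδ0,
        ht.eventually_lt_const hcc',
        eventually_ge_atTop 2] with n hKn hhd hPn htn htc' hn2
      rw [Real.dist_eq] at hhd hPn htn ⊢
      have hn1 : (0:ℝ) < (n:ℝ) - 1 := by
        have : (2:ℝ) ≤ (n:ℝ) := by exact_mod_cast hn2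
        linarith
      have hx0 : ∀ i, 0 ≤ x n i := fun i => div_nonneg (Nat.cast_nonneg _) hn1.le
      have hxle : ∀ i ∈ Finset.Icc 1 (q n), x n i ≤ c' := by
        intro i hi
        have hle : x n i ≤ t n := by
          rw [htx n]
          exact Finset.single_le_sum (fun j _ => hx0 j) hi
        exact hle.trans htc'.le
      -- split the sums
      have hsplit : (∑ i ∈ Finset.Icc 1 K, Real.log (1 - x n i))
          + ∑ i ∈ Finset.Ioc K (q n), Real.log (1 - x n i)
          = ∑ i ∈ Finset.Icc 1 (q n), Real.log (1 - x n i) := by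
        rw [Icc_one_eq_Ioc_zero K, Icc_one_eq_Ioc_zero (q n)]
        exact Finset.sum_Ioc_consecutive _ (Nat.zero_le K) hKn
      have hsplitx : (∑ i ∈ Finset.Icc 1 K, x n i)
          + ∑ i ∈ Finset.Ioc K (q n), x n i = t n := by
        rw [htx n, Icc_one_eq_Ioc_zero K, Icc_one_eq_Ioc_zero (q n)]
        exact Finset.sum_Ioc_consecutive _ (Nat.zero_le K) hKn
      -- bound on the middle part
      have hmid : |∑ i ∈ Finset.Ioc K (q n), Real.log (1 - x n i)| ≤ (TK + 2*δ) * L := by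
        calc |∑ i ∈ Finset.Ioc K (q n), Real.log (1 - x n i)|
            ≤ ∑ i ∈ Finset.Ioc K (q n), |Real.log (1 - x n i)| :=
              Finset.abs_sum_le_sum_abs _ _
          _ ≤ ∑ i ∈ Finset.Ioc K (q n), x n i * L := by
              refine Finset.sum_le_sum fun i hi => ?_
              have hi' : i ∈ Finset.Icc 1 (q n) := by
                rw [Finset.mem_Ioc] at hi
                rw [Finset.mem_Icc]
                omega
              exact abs_log_one_sub_le hc'1 (hx0 i) (hxle i hi')
          _ = (∑ i ∈ Finset.Ioc K (q n), x n i) * L := (Finset.sum_mul _ _ _).symm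
          _ ≤ (TK + 2*δ) * L := by
              refine mul_le_mul_of_nonneg_right ?_ hL0.le
              have habs1 := abs_lt.mp hPn
              have habs2 := abs_lt.mp htn
              linarith [habs1.1, habs2.2, hsplitx, hsplitc]
      -- head bound
      have hheadeq : (∑ i ∈ Finset.Icc 1 K,
            (Real.log (1 - x n i) - Real.log (1 - lam i)))
          = (∑ i ∈ Finset.Icc 1 K, Real.log (1 - x n i))
            - ∑ i ∈ Finset.Icc 1 K, Real.log (1 - lam i) :=
        Finset.sum_sub_distrib _ _
      have hparS : (∑ i ∈ Finset.Icc 1 K, Real.log (1 - lam i))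
          = ∑ j ∈ Finset.range K, f j := by
        rw [sum_Icc_one_eq_range (fun i => Real.log (1 - lam i)) K]
      have hhd' : |(∑ i ∈ Finset.Icc 1 K, Real.log (1 - x n i))
          - ∑ j ∈ Finset.range K, f j| < ε/4 := by
        rw [← hparS, ← hheadeq]
        simpa using hhd
      -- final combination
      have hdecomp : (∑ i ∈ Finset.Icc 1 (q n), Real.log (1 - x n i)) - S
          = ((∑ i ∈ Finset.Icc 1 K, Real.log (1 - x n i))
              - ∑ j ∈ Finset.range K, f j)
            + ((∑ i ∈ Finset.Ioc K (q n), Real.log (1 - x n i)) - ∑' j, f (j + K)) := by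
        rw [← hsplit, ← hsplitS]
        ring
      rw [hdecomp]
      have htri : |((∑ i ∈ Finset.Icc 1 K, Real.log (1 - x n i))
              - ∑ j ∈ Finset.range K, f j)
            + ((∑ i ∈ Finset.Ioc K (q n), Real.log (1 - x n i)) - ∑' j, f (j + K))|
          ≤ |(∑ i ∈ Finset.Icc 1 K, Real.log (1 - x n i))
              - ∑ j ∈ Finset.range K, f j|
            + (|∑ i ∈ Finset.Ioc K (q n), Real.log (1 - x n i)| + |∑' j, f (j + K)|) :=
        (abs_add_le _ _).trans (by gcongr; exact abs_sub _ _)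
      have hTKL : TK * L ≤ δ * L := mul_le_mul_of_nonneg_right hTKδ hL0.le
      have hmid2 : (TK + 2*δ) * L ≤ 3 * (δ * L) := by nlinarith
      linarith
    obtain ⟨N, hN⟩ := eventually_atTop.mp hev
    exact ⟨N, hN⟩
  -- conclude
  have h1tc : Tendsto (fun n => Real.log (1 - t n)) atTop (𝓝 (Real.log (1 - c))) := by
    apply Filter.Tendsto.log (tendsto_const_nhds.sub ht)
    intro h
    rw [sub_eq_zero] at h
    linarith
  have hmain : Tendsto (fun n =>
      2 * ((∑ i ∈ Finset.Icc 1 (q n), Real.log (1 - x n i)) - Real.log (1 - t n)))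
      atTop (𝓝 (2 * (S - Real.log (1 - c)))) := (hS.sub h1tc).const_mul 2
  refine hmain.congr' ?_
  filter_upwards [ht.eventually_lt_const hcc', eventually_ge_atTop 2] with n htc' hn2
  have hn1 : (0:ℝ) < (n:ℝ) - 1 := by
    have : (2:ℝ) ≤ (n:ℝ) := by exact_mod_cast hn2
    linarith
  have hx0 : ∀ i, 0 ≤ x n i := fun i => div_nonneg (Nat.cast_nonneg _) hn1.le
  have hxle : ∀ i ∈ Finset.Icc 1 (q n), x n i ≤ c' := by
    intro i hi
    have hle : x n i ≤ t n := by
      rw [htx n]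
      exact Finset.single_le_sum (fun j _ => hx0 j) hi
    exact hle.trans htc'.le
  have hfactor : ∀ i ∈ Finset.Icc 1 (q n), (0:ℝ) < 1 - x n i := fun i hi => by
    have := hxle i hi
    linarith
  have hP : 0 < ∏ i ∈ Finset.Icc 1 (q n), (1 - x n i) := Finset.prod_pos hfactor
  have h1t : 0 < 1 - t n := by linarith
  rw [Real.log_div hP.ne' h1t.ne',
    Real.log_prod (fun i hi => (hfactor i hi).ne')]
end

section
/- For positive integers n, q and p_1, …, p_q with p = Σ_{i=1}^q p_i < n − 1, define s_{n,q} = Σ_{i=1}^q (n − p_i − 3/2) log(1 − p_i/(n−1)) − (n − p − 3/2) log(1 − p/(n−1)), and define s_n = Σ_{i=1}^{q_n} (n − p_i − 1) log(1 − p_i/(n−1)) − (n − p − 1) log(1 − p/(n−1)) − σ^2/4 with σ^2 = 2 log((1−c)^{−1} Π_{i=1}^∞ (1 − λ_i)). If q_n → ∞, p_i/n → λ_i ∈ (0,1) for each fixed i, p/n → c < 1, and Σ_{i=1}^∞ λ_i = c, then s_n − s_{n, q_n} → 0 as n → ∞. -/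
open MeasureTheory Filter Finset
open scoped Topology BigOperators

private lemma aux_ratio : Tendsto (fun n : ℕ => (n : ℝ) / ((n : ℝ) - 1)) atTop (𝓝 1) := by
  have h1 : Tendsto (fun n : ℕ => ((n : ℝ) - 1)) atTop atTop :=
    tendsto_atTop_add_const_right atTop (-1) tendsto_natCast_atTop_atTop
  have h2 : Tendsto (fun n : ℕ => 1 + ((n : ℝ) - 1)⁻¹) atTop (𝓝 (1 + 0)) :=
    tendsto_const_nhds.add (tendsto_inv_atTop_zero.comp h1)
  have h3 : Tendsto (fun n : ℕ => 1 + ((n : ℝ) - 1)⁻¹) atTop (𝓝 1) := by simpa using h2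
  refine h3.congr' ?_
  filter_upwards [eventually_ge_atTop 2] with n hn
  have hn2 : (2 : ℝ) ≤ (n : ℝ) := by exact_mod_cast hn
  have hne : (n : ℝ) - 1 ≠ 0 := by linarith
  field_simp
  ring

private lemma aux_transfer (a : ℕ → ℕ) (l : ℝ)
    (h : Tendsto (fun n => (a n : ℝ) / n) atTop (𝓝 l)) :
    Tendsto (fun n => (a n : ℝ) / ((n : ℝ) - 1)) atTop (𝓝 l) := by
  have h2 : Tendsto (fun n : ℕ => ((a n : ℝ) / n) * ((n : ℝ) / ((n : ℝ) - 1))) atTop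
      (𝓝 (l * 1)) := h.mul aux_ratio
  rw [mul_one] at h2
  refine h2.congr' ?_
  filter_upwards [eventually_ge_atTop 2] with n hn
  have hn2 : (2 : ℝ) ≤ (n : ℝ) := by exact_mod_cast hn
  have hne : (n : ℝ) ≠ 0 := by linarith
  field_simp

private lemma log_bounds {t : ℝ} (h0 : 0 ≤ t) (h1 : t < 1) :
    t ≤ -Real.log (1 - t) ∧ -Real.log (1 - t) ≤ t / (1 - t) := by
  have hp : (0 : ℝ) < 1 - t := by linarith
  constructor
  · have := Real.log_le_sub_one_of_pos hp
    linarith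
  · have h2 := Real.log_le_sub_one_of_pos (inv_pos.2 hp)
    rw [Real.log_inv] at h2
    have he : (1 - t)⁻¹ - 1 = t / (1 - t) := by field_simp; ring
    linarith

private lemma summable_negloglam (lam : ℕ → ℝ) (c : ℝ)
    (hlam : ∀ i, 1 ≤ i → lam i ∈ Set.Ioo (0 : ℝ) 1)
    (hsum : HasSum (fun i : ℕ => lam (i + 1)) c) :
    Summable (fun i : ℕ => -Real.log (1 - lam (i + 1))) := by
  have hz : Tendsto (fun i : ℕ => lam (i + 1)) atTop (𝓝 0) := hsum.summable.tendsto_atTop_zero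
  obtain ⟨k, hk⟩ := (hz.eventually (eventually_le_nhds (by norm_num : (0:ℝ) < 1/2))).exists_forall_of_atTop
  rw [← summable_nat_add_iff k]
  have hs2 : Summable (fun i : ℕ => 2 * lam (i + k + 1)) :=
    ((summable_nat_add_iff k).2 hsum.summable).mul_left 2
  refine Summable.of_nonneg_of_le (fun i => ?_) (fun i => ?_) hs2
  · have h := hlam (i + k + 1) (by omega)
    linarith [(log_bounds h.1.le h.2).1, h.1]
  · have h := hlam (i + k + 1) (by omega)
    have hhalf : lam (i + k + 1) ≤ 1 / 2 := hk (i + k) (by omega)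
    have hb := (log_bounds h.1.le h.2).2
    have : lam (i + k + 1) / (1 - lam (i + k + 1)) ≤ 2 * lam (i + k + 1) := by
      rw [div_le_iff₀ (by linarith)]
      nlinarith [h.1.le]
    linarith

private lemma main_sum (q : ℕ → ℕ) (x : ℕ → ℕ → ℝ) (lam : ℕ → ℝ) (c : ℝ)
    (hq : Tendsto q atTop atTop)
    (hlam : ∀ i, 1 ≤ i → lam i ∈ Set.Ioo (0 : ℝ) 1)
    (hx : ∀ i, 1 ≤ i → Tendsto (fun n => x n i) atTop (𝓝 (lam i)))
    (hnn : ∀ᶠ n in atTop, ∀ i ∈ Finset.Icc 1 (q n), 0 ≤ x n i)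
    (hS : Tendsto (fun n => ∑ i ∈ Finset.Icc 1 (q n), x n i) atTop (𝓝 c))
    (hsum : HasSum (fun i : ℕ => lam (i + 1)) c) :
    Tendsto (fun n => ∑ i ∈ Finset.Icc 1 (q n), -Real.log (1 - x n i)) atTop
      (𝓝 (∑' i : ℕ, -Real.log (1 - lam (i + 1)))) := by
  set g : ℕ → ℝ := fun i => -Real.log (1 - lam (i + 1)) with hgdef
  have hg_sm : Summable g := summable_negloglam lam c hlam hsum
  set T : ℝ := ∑' i, g i with hT
  have hg_nn : ∀ i, 0 ≤ g i := by
    intro i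
    have h := hlam (i + 1) (by omega)
    have := (log_bounds h.1.le h.2).1
    simp only [hgdef]
    linarith [h.1]
  have hIcc : ∀ (m : ℕ) (f : ℕ → ℝ),
      ∑ i ∈ Finset.Icc 1 m, f i = ∑ i ∈ Finset.range m, f (i + 1) := by
    intro m f
    rw [← Finset.Ico_add_one_right_eq_Icc, Finset.sum_Ico_eq_sum_range]
    simp [Nat.add_comm]
  rw [Metric.tendsto_nhds]
  intro ε hε
  set δ : ℝ := min (1/4) (ε/16) with hδdef
  have hδ0 : 0 < δ := lt_min (by norm_num) (by linarith)
  have hδ4 : δ ≤ 1/4 := min_le_left _ _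
  have hδε : δ ≤ ε/16 := min_le_right _ _
  have hpg : Tendsto (fun N => ∑ i ∈ Finset.range N, g i) atTop (𝓝 T) :=
    hg_sm.hasSum.tendsto_sum_nat
  have hplam : Tendsto (fun N => ∑ i ∈ Finset.range N, lam (i + 1)) atTop (𝓝 c) :=
    hsum.tendsto_sum_nat
  obtain ⟨N, hN1, hN2⟩ := ((hpg.eventually (eventually_gt_nhds (show T - ε/4 < T by linarith))).and
    (hplam.eventually (eventually_gt_nhds (show c - δ/2 < c by linarith)))).exists
  -- finite part convergence
  have hfin : Tendsto (fun n => ∑ i ∈ Finset.Icc 1 N, -Real.log (1 - x n i)) atTop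
      (𝓝 (∑ i ∈ Finset.Icc 1 N, -Real.log (1 - lam i))) := by
    refine tendsto_finset_sum _ (fun i hi => ?_)
    have hi1 : 1 ≤ i := (Finset.mem_Icc.1 hi).1
    have hli := hlam i hi1
    have hne : (1 : ℝ) - lam i ≠ 0 := ne_of_gt (by linarith [hli.2])
    exact ((tendsto_const_nhds.sub (hx i hi1)).log hne).neg
  have e3 : ∀ᶠ n in atTop,
      dist (∑ i ∈ Finset.Icc 1 N, -Real.log (1 - x n i))
        (∑ i ∈ Finset.Icc 1 N, -Real.log (1 - lam i)) < ε/4 :=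
    Metric.tendsto_nhds.1 hfin (ε/4) (by linarith)
  have hxfin : Tendsto (fun n => ∑ i ∈ Finset.Icc 1 N, x n i) atTop
      (𝓝 (∑ i ∈ Finset.Icc 1 N, lam i)) :=
    tendsto_finset_sum _ (fun i hi => hx i (Finset.mem_Icc.1 hi).1)
  have hlt : c - ∑ i ∈ Finset.Icc 1 N, lam i < δ := by
    rw [hIcc N lam]
    linarith
  have e4 : ∀ᶠ n in atTop,
      (∑ i ∈ Finset.Icc 1 (q n), x n i) - ∑ i ∈ Finset.Icc 1 N, x n i < δ :=
    (hS.sub hxfin).eventually (eventually_lt_nhds hlt)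
  filter_upwards [hnn, hq.eventually_ge_atTop N, e3, e4] with n h1 h2 h3 h4
  have hIoc : ∀ m : ℕ, Finset.Icc 1 m = Finset.Ioc 0 m := fun m => Finset.Icc_add_one_left_eq_Ioc 0 m
  have hsplit : ∀ f : ℕ → ℝ, ∑ i ∈ Finset.Icc 1 (q n), f i
      = ∑ i ∈ Finset.Icc 1 N, f i + ∑ i ∈ Finset.Ioc N (q n), f i := by
    intro f
    rw [hIoc, hIoc]
    exact (Finset.sum_Ioc_consecutive f (Nat.zero_le N) h2).symm
  have hmemtail : ∀ i ∈ Finset.Ioc N (q n), i ∈ Finset.Icc 1 (q n) := by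
    intro i hi
    rw [Finset.mem_Ioc] at hi
    rw [Finset.mem_Icc]
    omega
  have htx_nn : ∀ i ∈ Finset.Ioc N (q n), 0 ≤ x n i := fun i hi => h1 i (hmemtail i hi)
  have htx_lt : ∑ i ∈ Finset.Ioc N (q n), x n i < δ := by
    have := hsplit (x n)
    linarith
  have hxi_le : ∀ i ∈ Finset.Ioc N (q n), x n i ≤ ∑ j ∈ Finset.Ioc N (q n), x n j :=
    fun i hi => Finset.single_le_sum htx_nn hi
  have hxi_lt : ∀ i ∈ Finset.Ioc N (q n), x n i ≤ 1/4 := by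
    intro i hi
    have := hxi_le i hi
    linarith
  have hfbound : ∀ i ∈ Finset.Ioc N (q n), -Real.log (1 - x n i) ≤ 2 * x n i := by
    intro i hi
    have h0 := htx_nn i hi
    have hx1 := hxi_lt i hi
    have hb := (log_bounds h0 (by linarith)).2
    have hd : x n i / (1 - x n i) ≤ 2 * x n i := by
      rw [div_le_iff₀ (by linarith)]
      nlinarith
    linarith
  have hf_nn : ∀ i ∈ Finset.Ioc N (q n), 0 ≤ -Real.log (1 - x n i) := by
    intro i hi
    have h0 := htx_nn i hi
    have hx1 := hxi_lt i hi
    linarith [(log_bounds h0 (by linarith)).1]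
  have htailf_le : ∑ i ∈ Finset.Ioc N (q n), -Real.log (1 - x n i)
      ≤ 2 * ∑ i ∈ Finset.Ioc N (q n), x n i := by
    rw [Finset.mul_sum]
    exact Finset.sum_le_sum hfbound
  have htailf_nn : 0 ≤ ∑ i ∈ Finset.Ioc N (q n), -Real.log (1 - x n i) :=
    Finset.sum_nonneg hf_nn
  have hpgN : ∑ i ∈ Finset.Icc 1 N, -Real.log (1 - lam i) = ∑ i ∈ Finset.range N, g i := by
    rw [hIcc N (fun i => -Real.log (1 - lam i))]
  have hTub : ∑ i ∈ Finset.range N, g i ≤ T := hg_sm.sum_le_tsum _ (fun i _ => hg_nn i)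
  rw [Real.dist_eq, hsplit (fun i => -Real.log (1 - x n i))]
  rw [Real.dist_eq, hpgN] at h3
  have habs := abs_lt.1 h3
  rw [abs_lt]
  constructor
  · nlinarith
  · nlinarith

/-- With
`s_{n,q} = ∑_{i=1}^q (n − p_i − 3/2) log(1 − p_i/(n−1)) − (n − p − 3/2) log(1 − p/(n−1))` and
`s_n = ∑_{i=1}^{q_n} (n − p_i − 1) log(1 − p_i/(n−1)) − (n − p − 1) log(1 − p/(n−1)) − σ²/4`,
where `σ² = 2 log((1−c)⁻¹ ∏_{i=1}^∞ (1 − λ_i))`, we have `s_n − s_{n,q_n} → 0`. -/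
theorem centering_difference_limit
    (q : ℕ → ℕ) (p : ℕ → ℕ → ℕ) (lam : ℕ → ℝ) (c : ℝ)
    (hpos : ∀ n, ∀ i ∈ Finset.Icc 1 (q n), 0 < p n i)
    -- p = ∑_{i=1}^{q_n} p_i < n − 1 (eventually)
    (hnp : ∀ᶠ n in atTop, (∑ i ∈ Finset.Icc 1 (q n), p n i) < n - 1)
    (hq : Tendsto q atTop atTop)
    (hlam : ∀ i, 1 ≤ i → lam i ∈ Set.Ioo (0 : ℝ) 1)
    (hpl : ∀ i, 1 ≤ i → Tendsto (fun n => (p n i : ℝ) / n) atTop (𝓝 (lam i)))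
    (hc : c < 1)
    (hpn : Tendsto (fun n => ((∑ i ∈ Finset.Icc 1 (q n), p n i : ℕ) : ℝ) / n)
      atTop (𝓝 c))
    (hsum : HasSum (fun i : ℕ => lam (i + 1)) c)
    (σ2 : ℝ) (hσ2 : σ2 = 2 * Real.log ((1 - c)⁻¹ * ∏' i : ℕ, (1 - lam (i + 1)))) :
    Tendsto (fun n =>
        -- s_n
        ((∑ i ∈ Finset.Icc 1 (q n),
            ((n : ℝ) - p n i - 1) * Real.log (1 - (p n i : ℝ) / ((n : ℝ) - 1)))
          - ((n : ℝ) - (∑ i ∈ Finset.Icc 1 (q n), p n i : ℕ) - 1)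
            * Real.log (1 - ((∑ i ∈ Finset.Icc 1 (q n), p n i : ℕ) : ℝ) / ((n : ℝ) - 1))
          - σ2 / 4)
        -- minus s_{n,q_n}
        - ((∑ i ∈ Finset.Icc 1 (q n),
            ((n : ℝ) - p n i - 3 / 2) * Real.log (1 - (p n i : ℝ) / ((n : ℝ) - 1)))
          - ((n : ℝ) - (∑ i ∈ Finset.Icc 1 (q n), p n i : ℕ) - 3 / 2)
            * Real.log (1 - ((∑ i ∈ Finset.Icc 1 (q n), p n i : ℕ) : ℝ) / ((n : ℝ) - 1))))
      atTop (𝓝 0) := by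
  have hx : ∀ i, 1 ≤ i →
      Tendsto (fun n => (p n i : ℝ) / ((n : ℝ) - 1)) atTop (𝓝 (lam i)) :=
    fun i hi => aux_transfer (fun n => p n i) (lam i) (hpl i hi)
  have hPn : Tendsto (fun n => ((∑ i ∈ Finset.Icc 1 (q n), p n i : ℕ) : ℝ) / ((n : ℝ) - 1))
      atTop (𝓝 c) := aux_transfer _ c hpn
  have hS : Tendsto (fun n => ∑ i ∈ Finset.Icc 1 (q n), (p n i : ℝ) / ((n : ℝ) - 1))
      atTop (𝓝 c) := by
    refine hPn.congr (fun n => ?_)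
    rw [Nat.cast_sum, Finset.sum_div]
  have hnn : ∀ᶠ n in atTop, ∀ i ∈ Finset.Icc 1 (q n), 0 ≤ (p n i : ℝ) / ((n : ℝ) - 1) := by
    filter_upwards [eventually_ge_atTop 2] with n hn i _
    have hn2 : (2 : ℝ) ≤ (n : ℝ) := by exact_mod_cast hn
    have : (0 : ℝ) < (n : ℝ) - 1 := by linarith
    positivity
  have hmain := main_sum q (fun n i => (p n i : ℝ) / ((n : ℝ) - 1)) lam c hq hlam hx hnn hS hsum
  -- log-sum limit
  set Sg : ℝ := ∑' i : ℕ, Real.log (1 - lam (i + 1)) with hSg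
  have hTneg : (∑' i : ℕ, -Real.log (1 - lam (i + 1))) = -Sg := tsum_neg
  have hL : Tendsto (fun n => ∑ i ∈ Finset.Icc 1 (q n),
      Real.log (1 - (p n i : ℝ) / ((n : ℝ) - 1))) atTop (𝓝 Sg) := by
    have := hmain.neg
    rw [hTneg, neg_neg] at this
    refine this.congr (fun n => ?_)
    rw [← Finset.sum_neg_distrib]
    simp
  -- M limit
  have hc0 : (0 : ℝ) < 1 - c := by linarith
  have hM : Tendsto (fun n => Real.log
      (1 - ((∑ i ∈ Finset.Icc 1 (q n), p n i : ℕ) : ℝ) / ((n : ℝ) - 1))) atTop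
      (𝓝 (Real.log (1 - c))) :=
    (tendsto_const_nhds.sub hPn).log (ne_of_gt hc0)
  -- sigma value
  have hg_sm : Summable (fun i : ℕ => Real.log (1 - lam (i + 1))) := by
    have h := (summable_negloglam lam c hlam hsum).neg
    refine h.congr (fun i => ?_)
    ring
  have hprod : (∏' i : ℕ, (1 - lam (i + 1))) = Real.exp Sg := by
    have h := Real.rexp_tsum_eq_tprod (f := fun i => 1 - lam (i + 1))
      (fun i => by
        have h := (hlam (i + 1) (by omega)).2
        show (0 : ℝ) < 1 - lam (i + 1)
        linarith)
      hg_sm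
    exact h.symm
  have hσval : σ2 / 4 = (-(Real.log (1 - c)) + Sg) / 2 := by
    rw [hσ2, hprod, Real.log_mul (inv_ne_zero (ne_of_gt hc0)) (Real.exp_ne_zero _),
      Real.log_exp, Real.log_inv]
    ring
  -- final assembly
  have hfinal : Tendsto (fun n =>
      (1/2) * (∑ i ∈ Finset.Icc 1 (q n), Real.log (1 - (p n i : ℝ) / ((n : ℝ) - 1)))
      - (1/2) * Real.log (1 - ((∑ i ∈ Finset.Icc 1 (q n), p n i : ℕ) : ℝ) / ((n : ℝ) - 1))
      - σ2 / 4) atTop (𝓝 ((1/2) * Sg - (1/2) * Real.log (1 - c) - σ2 / 4)) :=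
    ((hL.const_mul (1/2)).sub (hM.const_mul (1/2))).sub_const (σ2 / 4)
  have hval : (1/2) * Sg - (1/2) * Real.log (1 - c) - σ2 / 4 = 0 := by
    rw [hσval]; ring
  rw [hval] at hfinal
  refine hfinal.congr (fun n => ?_)
  have h1 : ∑ i ∈ Finset.Icc 1 (q n),
      ((n : ℝ) - p n i - 1) * Real.log (1 - (p n i : ℝ) / ((n : ℝ) - 1))
      = ∑ i ∈ Finset.Icc 1 (q n),
        ((n : ℝ) - p n i - 3 / 2) * Real.log (1 - (p n i : ℝ) / ((n : ℝ) - 1))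
        + (1/2) * ∑ i ∈ Finset.Icc 1 (q n), Real.log (1 - (p n i : ℝ) / ((n : ℝ) - 1)) := by
    rw [Finset.mul_sum, ← Finset.sum_add_distrib]
    exact Finset.sum_congr rfl (fun i _ => by ring)
  rw [h1]
  ring
end

section
/- Let p = p(n) and p_1 = p_1(n) be sequences of positive integers with p_1 < p < n, p/n → c ∈ (0,1) and p_1/n → λ_1 ∈ (0, c). Then Σ_{i = n − p}^{n − p_1 − 1} ψ_1(i/2) converges as n → ∞ to 2 log((1 − λ_1)/(1 − c)). -/
open MeasureTheory Filter Finset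
open scoped Topology BigOperators

/-- The digamma function `ψ₀(x) = (d/dx) log Γ(x)`. -/
noncomputable def digamma (x : ℝ) : ℝ := deriv (fun y => Real.log (Real.Gamma y)) x

/-- The trigamma function `ψ₁(x) = (d²/dx²) log Γ(x)`. -/
noncomputable def trigamma (x : ℝ) : ℝ := deriv digamma x

namespace TriAux

lemma hasSum_tele {x : ℝ} (hx : 0 < x) :
    HasSum (fun k : ℕ => 1/(x+k) - 1/(x+k+1)) (1/x) := by
  rw [hasSum_iff_tendsto_nat_of_nonneg]
  · have h : ∀ n : ℕ, ∑ k ∈ range n, (1/(x+(k:ℝ)) - 1/(x+k+1)) = 1/x - 1/(x+n) := by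
      intro n
      have := Finset.sum_range_sub' (fun k : ℕ => 1/(x+(k:ℝ))) n
      simp only [Nat.cast_add, Nat.cast_one, Nat.cast_zero, add_zero] at this
      rw [← this]
      refine Finset.sum_congr rfl fun k _ => by push_cast; ring_nf
    simp only [h]
    have h2 : Tendsto (fun n : ℕ => 1/(x+(n:ℝ))) atTop (𝓝 0) := by
      simp only [one_div]
      exact (tendsto_atTop_add_const_left _ x tendsto_natCast_atTop_atTop).inv_tendsto_atTop
    simpa using tendsto_const_nhds.sub h2
  · intro k
    have h1 : (0:ℝ) < x + k := by positivity
    have h2 : (0:ℝ) < x + k + 1 := by positivity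
    have := one_div_le_one_div_of_le h1 (by linarith : x + (k:ℝ) ≤ x + k + 1)
    linarith

lemma summable_inv_sq {x : ℝ} (hx : 0 < x) : Summable (fun k : ℕ => 1/(x+(k:ℝ))^2) := by
  rw [← summable_nat_add_iff 1]
  apply Summable.of_nonneg_of_le (fun k => by positivity) _ (hasSum_tele hx).summable
  intro k
  have h1 : (0:ℝ) < x + k := by positivity
  have h2 : (0:ℝ) < x + k + 1 := by positivity
  have key : 1/(x+(k:ℝ)) - 1/(x+k+1) = 1/((x+k)*(x+k+1)) := by field_simp; ring
  rw [key]
  push_cast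
  rw [show x + ((k:ℝ)+1) = x + k + 1 by ring]
  rw [div_le_div_iff₀ (by positivity) (by positivity)]
  nlinarith

lemma triSeries_lb {x : ℝ} (hx : 0 < x) : 1/x ≤ ∑' k : ℕ, 1/(x+(k:ℝ))^2 := by
  rw [← (hasSum_tele hx).tsum_eq]
  refine Summable.tsum_le_tsum (fun k => ?_) (hasSum_tele hx).summable (summable_inv_sq hx)
  have h1 : (0:ℝ) < x + k := by positivity
  have h2 : (0:ℝ) < x + k + 1 := by positivity
  have key : 1/(x+(k:ℝ)) - 1/(x+k+1) = 1/((x+k)*(x+k+1)) := by field_simp; ring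
  rw [key, div_le_div_iff₀ (by positivity) (by positivity)]
  nlinarith

lemma triSeries_ub {x : ℝ} (hx : 0 < x) : ∑' k : ℕ, 1/(x+(k:ℝ))^2 ≤ 1/x + 1/x^2 := by
  rw [Summable.tsum_eq_zero_add (summable_inv_sq hx)]
  have h0 : 1/(x+((0:ℕ):ℝ))^2 = 1/x^2 := by norm_num
  rw [h0, add_comm (1/x^2)]
  gcongr
  have hs : Summable (fun k : ℕ => 1/(x+((k:ℝ)+1))^2) := by
    have := (summable_nat_add_iff 1).mpr (summable_inv_sq hx)
    refine this.congr fun k => ?_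
    push_cast; ring_nf
  have hcast : ∑' k : ℕ, 1/(x+((k+1:ℕ):ℝ))^2 = ∑' k : ℕ, 1/(x+((k:ℕ):ℝ)+1)^2 :=
    tsum_congr fun k => by push_cast; ring_nf
  rw [hcast]
  calc ∑' k : ℕ, 1/(x+((k:ℕ):ℝ)+1)^2 
      ≤ ∑' k : ℕ, (1/(x+(k:ℝ)) - 1/(x+k+1)) := by
        refine Summable.tsum_le_tsum (fun k => ?_) ?_ (hasSum_tele hx).summable
        · have h1 : (0:ℝ) < x + k := by positivity
          have key : 1/(x+(k:ℝ)) - 1/(x+k+1) = 1/((x+k)*(x+k+1)) := by field_simp; ring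
          rw [key, div_le_div_iff₀ (by positivity) (by positivity)]
          nlinarith
        · refine hs.congr fun k => ?_; ring_nf
    _ = 1/x := (hasSum_tele hx).tsum_eq

/-! ### The function sequence `log ∘ GammaSeq` and its derivatives -/

noncomputable def Fseq (n : ℕ) (x : ℝ) : ℝ :=
  x * Real.log n + Real.log (n.factorial) - ∑ j ∈ range (n+1), Real.log (x + j)

noncomputable def Fseq' (n : ℕ) (x : ℝ) : ℝ :=
  Real.log n - ∑ j ∈ range (n+1), 1/(x + (j:ℝ))

lemma Fseq_eq_log_gammaSeq {n : ℕ} (hn : 1 ≤ n) {x : ℝ} (hx : 0 < x) :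
    Fseq n x = Real.log (Real.GammaSeq x n) := by
  have hn' : (0:ℝ) < n := by exact_mod_cast hn
  have hprod : (0:ℝ) < ∏ j ∈ range (n+1), (x + j) :=
    Finset.prod_pos fun j _ => by positivity
  have hfac : (0:ℝ) < (n.factorial : ℝ) := by exact_mod_cast n.factorial_pos
  rw [Real.GammaSeq, Real.log_div (by positivity) hprod.ne',
      Real.log_mul (by positivity) hfac.ne', Real.log_rpow hn',
      Real.log_prod (fun j _ => by positivity)]
  rfl

lemma hasDerivAt_Fseq (n : ℕ) {x : ℝ} (hx : 0 < x) :
    HasDerivAt (Fseq n) (Fseq' n x) x := by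
  have h1 : HasDerivAt (fun y : ℝ => y * Real.log n + Real.log (n.factorial)) (Real.log n) x :=
    (hasDerivAt_mul_const _).add_const _
  have h2 : HasDerivAt (fun y : ℝ => ∑ j ∈ range (n+1), Real.log (y + j))
      (∑ j ∈ range (n+1), 1/(x + (j:ℝ))) x := by
    refine HasDerivAt.fun_sum fun j _ => ?_
    have hj : x + (j:ℝ) ≠ 0 := by positivity
    have := (((hasDerivAt_id x).add_const (j:ℝ)).log hj)
    simpa [one_div] using this
  exact h1.fun_sub h2

lemma tendsto_Fseq {x : ℝ} (hx : 0 < x) :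
    Tendsto (fun n => Fseq n x) atTop (𝓝 (Real.log (Real.Gamma x))) := by
  have h2 : Real.Gamma x ≠ 0 := (Real.Gamma_pos_of_pos hx).ne'
  have h3 := (Real.continuousAt_log h2).tendsto.comp (Real.GammaSeq_tendsto_Gamma x)
  refine h3.congr' ?_
  filter_upwards [eventually_ge_atTop 1] with n hn
  exact (Fseq_eq_log_gammaSeq hn hx).symm

/-! ### small uniform-convergence helpers -/

lemma tendstoUniformlyOn_const_seq {c : ℕ → ℝ} {L : ℝ} (h : Tendsto c atTop (𝓝 L))
    (s : Set ℝ) : TendstoUniformlyOn (fun n (_ : ℝ) => c n) (fun _ => L) atTop s := by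
  rw [Metric.tendstoUniformlyOn_iff]
  intro ε hε
  filter_upwards [Metric.tendsto_nhds.mp h ε hε] with n hn x _
  rwa [dist_comm]

lemma tendstoUniformlyOn_shift {f : ℕ → ℝ → ℝ} {g : ℝ → ℝ} {s : Set ℝ}
    (h : TendstoUniformlyOn f g atTop s) :
    TendstoUniformlyOn (fun n => f (n+1)) g atTop s := by
  rw [Metric.tendstoUniformlyOn_iff] at h ⊢
  intro ε hε
  exact (tendsto_add_atTop_nat 1).eventually (h ε hε)

lemma min_mul_le {d : ℝ} (hd : 0 < d) (j : ℕ) : min d 1 * ((j:ℝ)+1) ≤ d + j := by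
  rcases le_total d 1 with h | h
  · rw [min_eq_left h]
    have : (0:ℝ) ≤ (j:ℝ) * (1 - d) := by
      apply mul_nonneg (Nat.cast_nonneg j); linarith
    nlinarith [Nat.cast_nonneg (α := ℝ) j]
  · rw [min_eq_right h]
    have : (1:ℝ) ≤ d := h
    have := Nat.cast_nonneg (α := ℝ) j
    linarith

lemma summable_base : Summable (fun j : ℕ => 1/((j:ℝ)+1)^2) := by
  have h := (summable_nat_add_iff 1).mpr (Real.summable_one_div_nat_pow.mpr one_lt_two)
  refine h.congr fun j => ?_
  push_cast; ring_nf

lemma gterm_eq {y : ℝ} (hy : 0 < y) (j : ℕ) :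
    1/((j:ℝ)+1) - 1/(y+j) = (y-1) * (1/(((j:ℝ)+1)*(y+j))) := by
  have h1 : ((j:ℝ)+1) ≠ 0 := by positivity
  have h2 : (y+(j:ℝ)) ≠ 0 := by positivity
  field_simp
  ring

lemma summable_gterm {y : ℝ} (hy : 0 < y) :
    Summable (fun j : ℕ => 1/((j:ℝ)+1) - 1/(y+j)) := by
  have hbase : Summable (fun j : ℕ => (y-1) * ((1/min y 1) * (1/((j:ℝ)+1)^2))) :=
    (summable_base.mul_left _).mul_left _
  have hbase' : Summable (fun j : ℕ => |y-1| * ((1/min y 1) * (1/((j:ℝ)+1)^2))) :=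
    (summable_base.mul_left _).mul_left _
  refine Summable.of_norm_bounded hbase' fun j => ?_
  rw [gterm_eq hy j, norm_mul]
  have hmin : 0 < min y 1 := lt_min hy one_pos
  have hden : 0 < ((j:ℝ)+1)*(y+j) := by positivity
  have key : 1/(((j:ℝ)+1)*(y+j)) ≤ (1/min y 1) * (1/((j:ℝ)+1)^2) := by
    rw [div_mul_div_comm, one_mul]
    apply one_div_le_one_div_of_le (by positivity)
    calc min y 1 * (((j:ℝ)+1)^2) = ((j:ℝ)+1) * (min y 1 * ((j:ℝ)+1)) := by ring
      _ ≤ ((j:ℝ)+1) * (y + j) :=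
          mul_le_mul_of_nonneg_left (min_mul_le hy j) (by positivity)
  rw [Real.norm_eq_abs, Real.norm_eq_abs, abs_of_nonneg (le_of_lt (by positivity : (0:ℝ) < 1/(((j:ℝ)+1)*(y+j))))]
  exact mul_le_mul_of_nonneg_left key (abs_nonneg _)

local notation "γ" => Real.eulerMascheroniConstant

noncomputable def Dig (y : ℝ) : ℝ := -γ + ∑' j : ℕ, (1/((j:ℝ)+1) - 1/(y+j))

lemma tendsto_const_part :
    Tendsto (fun n : ℕ => Real.log n - ∑ j ∈ range (n+1), 1/((j:ℝ)+1)) atTop (𝓝 (-γ)) := by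
  have hH : ∀ n : ℕ, ((harmonic n : ℚ) : ℝ) = ∑ j ∈ range n, 1/((j:ℝ)+1) := by
    intro n
    rw [harmonic, Rat.cast_sum]
    refine Finset.sum_congr rfl fun j _ => ?_
    push_cast
    rw [one_div]
  have h1 : Tendsto (fun n : ℕ => ((harmonic (n+1) : ℚ):ℝ) - Real.log ((n:ℝ)+1)) atTop (𝓝 γ) := by
    have := (Real.tendsto_harmonic_sub_log).comp (tendsto_add_atTop_nat 1)
    refine this.congr fun n => ?_
    simp only [Function.comp_apply]
    push_cast
    ring
  have h2 : Tendsto (fun n : ℕ => Real.log ((n:ℝ)+1) - Real.log n) atTop (𝓝 0) := by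
    have hr : Tendsto (fun n : ℕ => ((n:ℝ)+1)/n) atTop (𝓝 1) := by
      have h0 : Tendsto (fun n : ℕ => 1 + 1/(n:ℝ)) atTop (𝓝 (1 + 0)) :=
        tendsto_const_nhds.add tendsto_one_div_atTop_nhds_zero_nat
      rw [show (1:ℝ) + 0 = 1 by ring] at h0
      refine h0.congr' ?_
      filter_upwards [eventually_gt_atTop 0] with n hn
      have hn' : (n:ℝ) ≠ 0 := by positivity
      field_simp
    have hlog := (Real.continuousAt_log one_ne_zero).tendsto.comp hr
    rw [Real.log_one] at hlog
    refine hlog.congr' ?_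
    filter_upwards [eventually_gt_atTop 0] with n hn
    have hn' : (0:ℝ) < n := by exact_mod_cast hn
    simp only [Function.comp_apply]; rw [Real.log_div (by positivity) hn'.ne']
  have h3 := (h1.add h2).neg
  rw [show -(γ + 0) = -γ by ring] at h3
  refine h3.congr fun n => ?_
  rw [← hH (n+1)]
  push_cast
  ring

/-- Series formula for digamma. -/
lemma digamma_eq {x : ℝ} (hx : 0 < x) : digamma x = Dig x := by
  have hxs : x ∈ Set.Ioo (x/2) (x+1) := ⟨by linarith, by linarith⟩
  have hmin : 0 < min (x/2) 1 := lt_min (by linarith) one_pos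
  -- uniform convergence of the series part
  have hser0 : TendstoUniformlyOn
      (fun N y => ∑ j ∈ range N, (1/((j:ℝ)+1) - 1/(y+j)))
      (fun y => ∑' j : ℕ, (1/((j:ℝ)+1) - 1/(y+j))) atTop (Set.Ioo (x/2) (x+1)) := by
    refine tendstoUniformlyOn_tsum_nat
      ((summable_base.mul_left ((x+2) * (1/min (x/2) 1)))) fun j y hy => ?_
    obtain ⟨hy1, hy2⟩ := hy
    have hy0 : 0 < y := lt_trans (by linarith) hy1
    rw [gterm_eq hy0 j, norm_mul, Real.norm_eq_abs, Real.norm_eq_abs,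
      abs_of_nonneg (le_of_lt (by positivity : (0:ℝ) < 1/(((j:ℝ)+1)*(y+j))))]
    have hab : |y - 1| ≤ x + 2 := by
      rw [abs_le]; constructor <;> nlinarith
    have key : 1/(((j:ℝ)+1)*(y+j)) ≤ (1/min (x/2) 1) * (1/((j:ℝ)+1)^2) := by
      rw [div_mul_div_comm, one_mul]
      apply one_div_le_one_div_of_le (by positivity)
      calc min (x/2) 1 * (((j:ℝ)+1)^2) = ((j:ℝ)+1) * (min (x/2) 1 * ((j:ℝ)+1)) := by ring
        _ ≤ ((j:ℝ)+1) * (x/2 + j) :=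
            mul_le_mul_of_nonneg_left (min_mul_le (by linarith) j) (by positivity)
        _ ≤ ((j:ℝ)+1) * (y + j) := by
            apply mul_le_mul_of_nonneg_left _ (by positivity)
            linarith
    calc |y-1| * (1/(((j:ℝ)+1)*(y+j)))
        ≤ (x+2) * ((1/min (x/2) 1) * (1/((j:ℝ)+1)^2)) := by
          apply mul_le_mul hab key (by positivity) (by linarith)
      _ = (x+2) * (1/min (x/2) 1) * (1/((j:ℝ)+1)^2) := by ring
  have hser : TendstoUniformlyOn
      (fun n y => ∑ j ∈ range (n+1), (1/((j:ℝ)+1) - 1/(y+j)))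
      (fun y => ∑' j : ℕ, (1/((j:ℝ)+1) - 1/(y+j))) atTop (Set.Ioo (x/2) (x+1)) :=
    tendstoUniformlyOn_shift hser0
  have hconst : TendstoUniformlyOn
      (fun (n : ℕ) (_ : ℝ) => Real.log n - ∑ j ∈ range (n+1), 1/((j:ℝ)+1))
      (fun _ => -γ) atTop (Set.Ioo (x/2) (x+1)) :=
    tendstoUniformlyOn_const_seq tendsto_const_part _
  have hf' : TendstoUniformlyOn Fseq' Dig atTop (Set.Ioo (x/2) (x+1)) := by
    have h := hconst.add hser
    refine (h.congr ?_).congr_right ?_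
    · filter_upwards with n y hy
      simp only [Pi.add_apply, Fseq', Finset.sum_sub_distrib]
      ring
    · intro y hy
      simp only [Pi.add_apply, Dig]
  have hlogGamma : HasDerivAt (fun y => Real.log (Real.Gamma y)) (Dig x) x := by
    refine hasDerivAt_of_tendstoUniformlyOn (l := atTop) (f := Fseq) isOpen_Ioo hf' ?_ ?_ hxs
    · filter_upwards with n y hy
      exact hasDerivAt_Fseq n (lt_trans (by linarith) hy.1)
    · intro y hy
      exact tendsto_Fseq (lt_trans (by linarith) hy.1)
  rw [digamma, hlogGamma.deriv]

lemma hasDerivAt_Dig {x : ℝ} (hx : 0 < x) :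
    HasDerivAt Dig (∑' k : ℕ, 1/(x+(k:ℝ))^2) x := by
  have hxs : x ∈ Set.Ioo (x/2) (x+1) := ⟨by linarith, by linarith⟩
  have hmin : 0 < min (x/2) 1 := lt_min (by linarith) one_pos
  refine hasDerivAt_of_tendstoUniformlyOn (l := atTop) (f := fun n y => -γ + ∑ j ∈ range n, (1/((j:ℝ)+1) - 1/(y+j)))
    (f' := fun n y => ∑ j ∈ range n, 1/(y+(j:ℝ))^2) (g := Dig)
    (g' := fun y => ∑' k : ℕ, 1/(y+(k:ℝ))^2) isOpen_Ioo ?_ ?_ ?_ hxs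
  · refine tendstoUniformlyOn_tsum_nat
      (summable_base.mul_left ((1/min (x/2) 1)^2)) fun j y hy => ?_
    obtain ⟨hy1, hy2⟩ := hy
    have hy0 : 0 < y := lt_trans (by linarith) hy1
    rw [Real.norm_eq_abs, abs_of_nonneg (le_of_lt (by positivity : (0:ℝ) < 1/(y+(j:ℝ))^2))]
    have key : min (x/2) 1 * ((j:ℝ)+1) ≤ y + j := by
      have := min_mul_le (by linarith : (0:ℝ) < x/2) j
      linarith
    rw [show (1/min (x/2) 1)^2 * (1/((j:ℝ)+1)^2) = 1/(min (x/2) 1 * ((j:ℝ)+1))^2 by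
      rw [mul_pow]; rw [div_pow, div_mul_div_comm, one_pow, one_mul]]
    apply one_div_le_one_div_of_le (by positivity)
    have h1 : 0 < min (x/2) 1 * ((j:ℝ)+1) := by positivity
    nlinarith
  · filter_upwards with n y hy
    have hy0 : 0 < y := lt_trans (by linarith) hy.1
    refine HasDerivAt.const_add _ (HasDerivAt.fun_sum fun j _ => ?_)
    have hne : y + (j:ℝ) ≠ 0 := by positivity
    have hinv := ((hasDerivAt_id y).add_const (j:ℝ)).inv hne
    have := hinv.const_sub (1/((j:ℝ)+1))
    simpa [one_div, neg_div] using this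
  · intro y hy
    have hy0 : 0 < y := lt_trans (by linarith) hy.1
    exact tendsto_const_nhds.add (summable_gterm hy0).hasSum.tendsto_sum_nat

lemma trigamma_eq {x : ℝ} (hx : 0 < x) : trigamma x = ∑' k : ℕ, 1/(x+(k:ℝ))^2 := by
  have hev : digamma =ᶠ[𝓝 x] Dig := by
    filter_upwards [isOpen_Ioi.mem_nhds (Set.mem_Ioi.mpr hx)] with y hy
    exact digamma_eq hy
  rw [trigamma, hev.deriv_eq, (hasDerivAt_Dig hx).deriv]

lemma trigamma_bounds {x : ℝ} (hx : 0 < x) :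
    1/x ≤ trigamma x ∧ trigamma x ≤ 1/x + 1/x^2 := by
  rw [trigamma_eq hx]
  exact ⟨triSeries_lb hx, triSeries_ub hx⟩

end TriAux

namespace TriAux

lemma log_succ_sub_le {t : ℝ} (ht : 0 < t) : Real.log (t+1) - Real.log t ≤ 1/t := by
  rw [← Real.log_div (by positivity) ht.ne']
  have h := Real.log_le_sub_one_of_pos (show 0 < (t+1)/t by positivity)
  have h2 : (t+1)/t - 1 = 1/t := by field_simp; ring
  linarith

lemma le_log_succ_sub {t : ℝ} (ht : 0 < t) : 1/(t+1) ≤ Real.log (t+1) - Real.log t := by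
  have h := Real.log_le_sub_one_of_pos (show 0 < t/(t+1) by positivity)
  have h2 : Real.log (t/(t+1)) = Real.log t - Real.log (t+1) :=
    Real.log_div ht.ne' (by positivity)
  have h3 : t/(t+1) - 1 = -(1/(t+1)) := by field_simp; ring
  linarith

lemma sum_inv_ge {a b : ℕ} (ha : 1 ≤ a) (hab : a ≤ b) :
    Real.log b - Real.log a ≤ ∑ i ∈ Ico a b, (1:ℝ)/i := by
  have haR : (1:ℝ) ≤ (a:ℝ) := by exact_mod_cast ha
  have hcast : ((b - a : ℕ) : ℝ) = (b:ℝ) - a := by push_cast [Nat.cast_sub hab]; ring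
  rw [Finset.sum_Ico_eq_sum_range]
  have hby : Real.log b - Real.log a
      = ∑ i ∈ range (b-a), (Real.log ((a:ℝ) + ((i+1:ℕ):ℝ)) - Real.log ((a:ℝ) + (i:ℕ))) := by
    rw [Finset.sum_range_sub (fun i : ℕ => Real.log ((a:ℝ) + i)) (b-a), hcast,
      show (a:ℝ) + ((b:ℝ) - a) = b by ring]
    norm_num
  rw [hby]
  refine Finset.sum_le_sum fun i _ => ?_
  have hpos : (0:ℝ) < (a:ℝ) + i := by positivity
  push_cast
  rw [show (a:ℝ) + ((i:ℝ)+1) = ((a:ℝ)+i)+1 by ring]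
  exact log_succ_sub_le hpos

lemma sum_inv_le {a b : ℕ} (ha : 2 ≤ a) (hab : a ≤ b) :
    ∑ i ∈ Ico a b, (1:ℝ)/i ≤ Real.log ((b:ℝ)-1) - Real.log ((a:ℝ)-1) := by
  have haR : (2:ℝ) ≤ (a:ℝ) := by exact_mod_cast ha
  have hcast : ((b - a : ℕ) : ℝ) = (b:ℝ) - a := by push_cast [Nat.cast_sub hab]; ring
  rw [Finset.sum_Ico_eq_sum_range]
  have hby : Real.log ((b:ℝ)-1) - Real.log ((a:ℝ)-1)
      = ∑ i ∈ range (b-a), (Real.log (((a:ℝ)-1) + ((i+1:ℕ):ℝ)) - Real.log (((a:ℝ)-1) + (i:ℕ))) := by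
    rw [Finset.sum_range_sub (fun i : ℕ => Real.log (((a:ℝ)-1) + i)) (b-a), hcast,
      show ((a:ℝ)-1) + ((b:ℝ) - a) = (b:ℝ)-1 by ring]
    norm_num
  rw [hby]
  refine Finset.sum_le_sum fun i _ => ?_
  have hpos : (0:ℝ) < ((a:ℝ)-1) + i := by
    have : (0:ℝ) ≤ (i:ℝ) := Nat.cast_nonneg i
    linarith
  push_cast
  rw [show (a:ℝ) - 1 + ((i:ℝ)+1) = (((a:ℝ)-1)+i)+1 by ring,
    show (a:ℝ) + (i:ℝ) = (((a:ℝ)-1)+i)+1 by ring]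
  exact le_log_succ_sub hpos

lemma trigamma_half_ge {i : ℕ} (hi : 1 ≤ i) : 2/(i:ℝ) ≤ trigamma ((i:ℝ)/2) := by
  have hiR : (1:ℝ) ≤ (i:ℝ) := by exact_mod_cast hi
  have hx : (0:ℝ) < (i:ℝ)/2 := by linarith
  have h := (trigamma_bounds hx).1
  rwa [show 1/((i:ℝ)/2) = 2/(i:ℝ) by rw [one_div_div]] at h

lemma trigamma_half_le {i : ℕ} (hi : 1 ≤ i) : trigamma ((i:ℝ)/2) ≤ 2/(i:ℝ) + 4/(i:ℝ)^2 := by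
  have hiR : (1:ℝ) ≤ (i:ℝ) := by exact_mod_cast hi
  have hx : (0:ℝ) < (i:ℝ)/2 := by linarith
  have h := (trigamma_bounds hx).2
  rwa [show 1/((i:ℝ)/2) = 2/(i:ℝ) by rw [one_div_div],
    show 1/((i:ℝ)/2)^2 = 4/(i:ℝ)^2 by rw [div_pow, one_div_div]; norm_num] at h

lemma main_lower {a b : ℕ} (ha : 1 ≤ a) (hab : a ≤ b) :
    2*(Real.log b - Real.log a) ≤ ∑ i ∈ Ico a b, trigamma ((i:ℝ)/2) := by
  calc 2*(Real.log b - Real.log a) ≤ 2 * ∑ i ∈ Ico a b, (1:ℝ)/i := by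
        have := sum_inv_ge ha hab; linarith
    _ = ∑ i ∈ Ico a b, 2/(i:ℝ) := by
        rw [Finset.mul_sum]; exact Finset.sum_congr rfl fun i _ => by ring
    _ ≤ ∑ i ∈ Ico a b, trigamma ((i:ℝ)/2) := by
        refine Finset.sum_le_sum fun i hi => ?_
        exact trigamma_half_ge (le_trans ha (Finset.mem_Ico.mp hi).1)

lemma main_upper {a b : ℕ} (ha : 2 ≤ a) (hab : a ≤ b) :
    ∑ i ∈ Ico a b, trigamma ((i:ℝ)/2)
      ≤ 2*(Real.log ((b:ℝ)-1) - Real.log ((a:ℝ)-1)) + ((b:ℝ) - a) * (4/(a:ℝ)^2) := by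
  have ha0 : (0:ℝ) < (a:ℝ) := by positivity
  calc ∑ i ∈ Ico a b, trigamma ((i:ℝ)/2)
      ≤ ∑ i ∈ Ico a b, (2/(i:ℝ) + 4/(i:ℝ)^2) := by
        refine Finset.sum_le_sum fun i hi => ?_
        exact trigamma_half_le (le_trans (by omega) (Finset.mem_Ico.mp hi).1)
    _ = 2 * ∑ i ∈ Ico a b, (1:ℝ)/i + ∑ i ∈ Ico a b, 4/(i:ℝ)^2 := by
        rw [Finset.sum_add_distrib, Finset.mul_sum]
        congr 1
        exact Finset.sum_congr rfl fun i _ => by ring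
    _ ≤ 2*(Real.log ((b:ℝ)-1) - Real.log ((a:ℝ)-1)) + ((b:ℝ) - a) * (4/(a:ℝ)^2) := by
        have h1 := sum_inv_le ha hab
        have h2 : ∑ i ∈ Ico a b, 4/(i:ℝ)^2 ≤ ((b:ℝ) - a) * (4/(a:ℝ)^2) := by
          have hcard := Finset.sum_le_card_nsmul (Ico a b) (fun i => 4/(i:ℝ)^2) (4/(a:ℝ)^2) ?_
          · rw [Nat.card_Ico, nsmul_eq_mul] at hcard
            rwa [show (((b - a : ℕ)):ℝ) = (b:ℝ) - a by push_cast [Nat.cast_sub hab]; ring] at hcard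
          · intro i hi
            have hia : a ≤ i := (Finset.mem_Ico.mp hi).1
            have hiaR : (a:ℝ) ≤ (i:ℝ) := by exact_mod_cast hia
            apply div_le_div_of_nonneg_left (by norm_num) (by positivity)
            nlinarith
        linarith

end TriAux

/-- If `p₁ < p < n`, `p/n → c ∈ (0,1)` and `p₁/n → λ₁ ∈ (0,c)`, then
`∑_{i=n−p}^{n−p₁−1} ψ₁(i/2) → 2 log((1−λ₁)/(1−c))`. -/
theorem trigamma_block_sum_limit
    (p p1 : ℕ → ℕ) (c lam1 : ℝ)
    (hpos : ∀ n, 0 < p1 n)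
    (hlt : ∀ᶠ n in atTop, p1 n < p n ∧ p n < n)
    (hc : c ∈ Set.Ioo (0 : ℝ) 1)
    (hlam : lam1 ∈ Set.Ioo (0 : ℝ) c)
    (hpn : Tendsto (fun n => (p n : ℝ) / n) atTop (𝓝 c))
    (hp1n : Tendsto (fun n => (p1 n : ℝ) / n) atTop (𝓝 lam1)) :
    Tendsto (fun n => ∑ i ∈ Finset.Icc (n - p n) (n - p1 n - 1), trigamma ((i : ℝ) / 2))
      atTop (𝓝 (2 * Real.log ((1 - lam1) / (1 - c)))) := by
  obtain ⟨hc0, hc1⟩ := hc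
  obtain ⟨hl0, hl1⟩ := hlam
  have h1c : (0:ℝ) < 1 - c := by linarith
  have h1l : (0:ℝ) < 1 - lam1 := by linarith
  set a : ℕ → ℕ := fun n => n - p n with hadef
  set b : ℕ → ℕ := fun n => n - p1 n with hbdef
  -- limits of a n / n and b n / n
  have haR : Tendsto (fun n => (a n : ℝ)/n) atTop (𝓝 (1 - c)) := by
    refine (tendsto_const_nhds.sub hpn).congr' ?_
    filter_upwards [hlt, eventually_gt_atTop 0] with n hn hn0
    have hnR : (0:ℝ) < (n:ℝ) := by exact_mod_cast hn0
    rw [hadef]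
    rw [Nat.cast_sub hn.2.le]
    field_simp
  have hbR : Tendsto (fun n => (b n : ℝ)/n) atTop (𝓝 (1 - lam1)) := by
    refine (tendsto_const_nhds.sub hp1n).congr' ?_
    filter_upwards [hlt, eventually_gt_atTop 0] with n hn hn0
    have hnR : (0:ℝ) < (n:ℝ) := by exact_mod_cast hn0
    rw [hbdef]
    rw [Nat.cast_sub (lt_trans hn.1 hn.2).le]
    field_simp
  have haTop : Tendsto (fun n => (a n : ℝ)) atTop atTop := by
    have h := Filter.Tendsto.pos_mul_atTop h1c haR tendsto_natCast_atTop_atTop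
    refine h.congr' ?_
    filter_upwards [eventually_gt_atTop 0] with n hn0
    have hnR : (0:ℝ) ≠ (n:ℝ) := by
      have : (0:ℝ) < (n:ℝ) := by exact_mod_cast hn0
      exact this.ne
    field_simp
  -- eventually a n ≥ 2
  have ha2 : ∀ᶠ n in atTop, 2 ≤ a n := by
    filter_upwards [haTop.eventually_ge_atTop 2] with n hn
    exact_mod_cast hn
  -- ratio limits
  have hratio : Tendsto (fun n => (b n:ℝ)/(a n:ℝ)) atTop (𝓝 ((1-lam1)/(1-c))) := by
    refine ((hbR.div haR h1c.ne')).congr' ?_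
    filter_upwards [eventually_gt_atTop 0, haTop.eventually_ge_atTop 1] with n hn0 h1
    have hnR : (n:ℝ) ≠ 0 := by
      have : (0:ℝ) < (n:ℝ) := by exact_mod_cast hn0
      exact this.ne'
    have haR' : (a n:ℝ) ≠ 0 := by linarith
    simp only [Pi.div_apply]
    field_simp
  have hbR1 : Tendsto (fun n => ((b n:ℝ)-1)/n) atTop (𝓝 (1-lam1)) := by
    have h := hbR.sub tendsto_one_div_atTop_nhds_zero_nat
    rw [sub_zero] at h
    refine h.congr' ?_
    filter_upwards [eventually_gt_atTop 0] with n hn0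
    have hnR : (n:ℝ) ≠ 0 := by
      have : (0:ℝ) < (n:ℝ) := by exact_mod_cast hn0
      exact this.ne'
    field_simp
  have haR1 : Tendsto (fun n => ((a n:ℝ)-1)/n) atTop (𝓝 (1-c)) := by
    have h := haR.sub tendsto_one_div_atTop_nhds_zero_nat
    rw [sub_zero] at h
    refine h.congr' ?_
    filter_upwards [eventually_gt_atTop 0] with n hn0
    have hnR : (n:ℝ) ≠ 0 := by
      have : (0:ℝ) < (n:ℝ) := by exact_mod_cast hn0
      exact this.ne'
    field_simp
  have hratio1 : Tendsto (fun n => ((b n:ℝ)-1)/((a n:ℝ)-1)) atTop (𝓝 ((1-lam1)/(1-c))) := by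
    refine ((hbR1.div haR1 h1c.ne')).congr' ?_
    filter_upwards [eventually_gt_atTop 0, haTop.eventually_ge_atTop 2] with n hn0 h2
    have hnR : (n:ℝ) ≠ 0 := by
      have : (0:ℝ) < (n:ℝ) := by exact_mod_cast hn0
      exact this.ne'
    have haR' : (a n:ℝ) - 1 ≠ 0 := by linarith
    simp only [Pi.div_apply]
    field_simp
  have hposratio : ((1-lam1)/(1-c)) ≠ 0 := by positivity
  have hLo : Tendsto (fun n => 2 * Real.log ((b n:ℝ)/(a n:ℝ))) atTop
      (𝓝 (2 * Real.log ((1-lam1)/(1-c)))) :=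
    (((Real.continuousAt_log hposratio).tendsto).comp hratio).const_mul 2
  have hUp1 : Tendsto (fun n => 2 * Real.log (((b n:ℝ)-1)/((a n:ℝ)-1))) atTop
      (𝓝 (2 * Real.log ((1-lam1)/(1-c)))) :=
    (((Real.continuousAt_log hposratio).tendsto).comp hratio1).const_mul 2
  have hUp2 : Tendsto (fun n => ((b n:ℝ) - (a n:ℝ)) * (4/(a n:ℝ)^2)) atTop (𝓝 0) := by
    have hinner : Tendsto (fun n => 4/((a n:ℝ)/n)^2) atTop (𝓝 (4/(1-c)^2)) :=
      tendsto_const_nhds.div (haR.pow 2) (by positivity)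
    have key := ((hbR.sub haR).mul hinner).mul tendsto_one_div_atTop_nhds_zero_nat
    rw [mul_zero] at key
    refine key.congr' ?_
    filter_upwards [eventually_gt_atTop 0, haTop.eventually_ge_atTop 1] with n hn0 h1
    have hnR : (n:ℝ) ≠ 0 := by
      have : (0:ℝ) < (n:ℝ) := by exact_mod_cast hn0
      exact this.ne'
    have haR' : (a n:ℝ) ≠ 0 := by linarith
    field_simp
  have hUp : Tendsto (fun n => 2 * Real.log (((b n:ℝ)-1)/((a n:ℝ)-1))
      + ((b n:ℝ) - (a n:ℝ)) * (4/(a n:ℝ)^2)) atTop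
      (𝓝 (2 * Real.log ((1-lam1)/(1-c)))) := by
    have := hUp1.add hUp2
    rwa [add_zero] at this
  refine tendsto_of_tendsto_of_tendsto_of_le_of_le' hLo hUp ?_ ?_
  · -- lower bound
    filter_upwards [hlt, ha2] with n hn h2
    have hab : a n ≤ b n := Nat.sub_le_sub_left hn.1.le n
    have hb1 : 1 ≤ b n := by omega
    have hIcc : Finset.Icc (a n) (b n - 1) = Finset.Ico (a n) (b n) := by
      rw [← Finset.Ico_add_one_right_eq_Icc, Nat.sub_add_cancel hb1]
    have ha0 : (a n:ℝ) ≠ 0 := by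
      have : (0:ℕ) < a n := by omega
      positivity
    have hb0 : (b n:ℝ) ≠ 0 := by
      have : (0:ℕ) < b n := by omega
      positivity
    calc 2 * Real.log ((b n:ℝ)/(a n:ℝ)) = 2 * (Real.log (b n) - Real.log (a n)) := by
          rw [Real.log_div hb0 ha0]
      _ ≤ ∑ i ∈ Finset.Ico (a n) (b n), trigamma ((i:ℝ)/2) := TriAux.main_lower (by omega) hab
      _ = ∑ i ∈ Finset.Icc (a n) (b n - 1), trigamma ((i:ℝ)/2) := by rw [hIcc]
  · -- upper bound
    filter_upwards [hlt, ha2] with n hn h2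
    have hab : a n ≤ b n := Nat.sub_le_sub_left hn.1.le n
    have hb1 : 1 ≤ b n := by omega
    have hIcc : Finset.Icc (a n) (b n - 1) = Finset.Ico (a n) (b n) := by
      rw [← Finset.Ico_add_one_right_eq_Icc, Nat.sub_add_cancel hb1]
    calc ∑ i ∈ Finset.Icc (a n) (b n - 1), trigamma ((i:ℝ)/2)
        = ∑ i ∈ Finset.Ico (a n) (b n), trigamma ((i:ℝ)/2) := by rw [hIcc]
      _ ≤ 2*(Real.log ((b n:ℝ)-1) - Real.log ((a n:ℝ)-1)) + ((b n:ℝ) - a n) * (4/(a n:ℝ)^2) :=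
          TriAux.main_upper h2 hab
      _ = 2 * Real.log (((b n:ℝ)-1)/((a n:ℝ)-1)) + ((b n:ℝ) - (a n:ℝ)) * (4/(a n:ℝ)^2) := by
          rw [Real.log_div ?hb ?ha]
          case hb =>
            have : (2:ℝ) ≤ (b n:ℝ) := by exact_mod_cast le_trans h2 hab
            linarith
          case ha =>
            have : (2:ℝ) ≤ (a n:ℝ) := by exact_mod_cast h2
            linarith
end

section
/- For each n let q_n and p_1, …, p_{q_n} be positive integers with p = Σ_{i=1}^{q_n} p_i < n − 1. If q_n → ∞, p_i/n → λ_i ∈ (0,1) for each fixed i, p/n → c < 1 and Σ_{i=1}^∞ λ_i = c, then Σ_{i=2}^{q_n} log(1 − p_i/(n − 1)) converges as n → ∞ to Σ_{i=2}^∞ log(1 − λ_i). -/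
open MeasureTheory Filter Finset
open scoped Topology BigOperators
set_option maxHeartbeats 1000000

private lemma abs_log_le {x d : ℝ} (hd : 0 < d) (hx0 : 0 ≤ x) (hx1 : x ≤ 1 - d) :
    |Real.log (1 - x)| ≤ x / d := by
  have h1 : (0:ℝ) < 1 - x := by linarith
  have h2 : Real.log (1 - x) ≤ 0 := Real.log_nonpos (by linarith) (by linarith)
  rw [abs_of_nonpos h2]
  have h3 := Real.log_le_sub_one_of_pos (inv_pos.mpr h1)
  rw [Real.log_inv] at h3
  have h4 : (1 - x)⁻¹ - 1 = x / (1 - x) := by field_simp; ring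
  have h5 : x / (1 - x) ≤ x / d := by gcongr <;> linarith
  rw [h4] at h3
  linarith

/-- Under the block-dimension asymptotics, `∑_{i=2}^{q_n} log(1 − p_i/(n−1))`
converges to `∑_{i=2}^∞ log(1 − λ_i)`. -/
theorem log_sum_limit
    (q : ℕ → ℕ) (p : ℕ → ℕ → ℕ) (lam : ℕ → ℝ) (c : ℝ)
    (hpos : ∀ n, ∀ i ∈ Finset.Icc 1 (q n), 0 < p n i)
    -- p = ∑_{i=1}^{q_n} p_i < n − 1 (eventually)
    (hnp : ∀ᶠ n in atTop, (∑ i ∈ Finset.Icc 1 (q n), p n i) < n - 1)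
    (hq : Tendsto q atTop atTop)
    (hlam : ∀ i, 1 ≤ i → lam i ∈ Set.Ioo (0 : ℝ) 1)
    (hpl : ∀ i, 1 ≤ i → Tendsto (fun n => (p n i : ℝ) / n) atTop (𝓝 (lam i)))
    (hc : c < 1)
    (hpn : Tendsto (fun n => ((∑ i ∈ Finset.Icc 1 (q n), p n i : ℕ) : ℝ) / n)
      atTop (𝓝 c))
    (hsum : HasSum (fun i : ℕ => lam (i + 1)) c) :
    Tendsto (fun n =>
        ∑ i ∈ Finset.Icc 2 (q n), Real.log (1 - (p n i : ℝ) / ((n : ℝ) - 1)))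
      atTop (𝓝 (∑' i : ℕ, Real.log (1 - lam (i + 2)))) := by
  have hl1 : 0 < lam 1 := (hlam 1 le_rfl).1
  have hlampos : ∀ i, 1 ≤ i → 0 < lam i := fun i hi => (hlam i hi).1
  have hcnn : ∀ j, 2 ≤ j → lam j ≤ c - lam 1 := by
    intro j hj
    have hne : (0:ℕ) ≠ j - 1 := by omega
    have h2 : ∑ i ∈ ({0, j-1} : Finset ℕ), lam (i+1) ≤ c := by
      apply sum_le_hasSum _ _ hsum
      intro i _
      exact (hlampos (i+1) (by omega)).le
    rw [Finset.sum_pair hne] at h2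
    have hj1 : j - 1 + 1 = j := by omega
    rw [hj1] at h2
    linarith
  set d : ℝ := min (lam 1 / 2) (1 - (c - lam 1)) with hd_def
  have hd : 0 < d := lt_min (by linarith) (by linarith)
  have hd1 : d ≤ lam 1 / 2 := min_le_left _ _
  have hd2 : d ≤ 1 - (c - lam 1) := min_le_right _ _
  have hlamd : ∀ j, 2 ≤ j → lam j ≤ 1 - d := by
    intro j hj; have := hcnn j hj; linarith
  have hs1 : Summable (fun i => lam (i + 1)) := hsum.summable
  have hs2 : Summable (fun i => lam (i + 2)) := by
    have := (summable_nat_add_iff (f := fun i => lam (i+1)) 1).mpr hs1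
    apply this.congr
    intro i; congr 1 <;> omega
  set g : ℕ → ℝ := fun i => Real.log (1 - lam (i + 2)) with hg_def
  have hglam : ∀ i : ℕ, |g i| ≤ lam (i+2) / d := fun i =>
    abs_log_le hd (hlampos (i+2) (by omega)).le (hlamd (i+2) (by omega))
  have hgsum : Summable g := by
    apply Summable.of_norm_bounded (hs2.div_const d)
    intro i; simpa [Real.norm_eq_abs] using hglam i
  set L : ℝ := ∑' i, g i with hL_def
  -- n/(n-1) → 1
  have hsub : Tendsto (fun n : ℕ => (n:ℝ) - 1) atTop atTop := by
    simpa [sub_eq_add_neg] using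
      tendsto_atTop_add_const_right atTop (-1 : ℝ) tendsto_natCast_atTop_atTop
  have hratio : Tendsto (fun n : ℕ => (n:ℝ) / ((n:ℝ) - 1)) atTop (𝓝 1) := by
    have h0 : Tendsto (fun n : ℕ => ((n:ℝ) - 1)⁻¹) atTop (𝓝 0) :=
      hsub.inv_tendsto_atTop
    have h1 : Tendsto (fun n : ℕ => 1 + ((n:ℝ) - 1)⁻¹) atTop (𝓝 1) := by
      simpa using tendsto_const_nhds.add h0
    apply h1.congr'
    filter_upwards [eventually_ge_atTop 2] with n hn
    have h2 : (2:ℝ) ≤ n := by exact_mod_cast hn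
    have hne : (n:ℝ) - 1 ≠ 0 := by intro h; linarith
    field_simp; ring
  have hx : ∀ i, 1 ≤ i →
      Tendsto (fun n => (p n i : ℝ) / ((n:ℝ) - 1)) atTop (𝓝 (lam i)) := by
    intro i hi
    have h := (hpl i hi).mul hratio
    rw [mul_one] at h
    apply h.congr'
    filter_upwards [eventually_ge_atTop 2] with n hn
    have h2 : (2:ℝ) ≤ n := by exact_mod_cast hn
    have hne : (n:ℝ) - 1 ≠ 0 := by intro h; linarith
    have hn0 : (n:ℝ) ≠ 0 := by linarith
    field_simp
  have hT : Tendsto (fun n => ∑ i ∈ Finset.Icc 1 (q n), (p n i : ℝ) / ((n:ℝ) - 1))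
      atTop (𝓝 c) := by
    have h := hpn.mul hratio
    rw [mul_one] at h
    apply h.congr'
    filter_upwards [eventually_ge_atTop 2] with n hn
    have h2 : (2:ℝ) ≤ n := by exact_mod_cast hn
    have hne : (n:ℝ) - 1 ≠ 0 := by intro h; linarith
    have hn0 : (n:ℝ) ≠ 0 := by linarith
    rw [← Finset.sum_div, Nat.cast_sum]
    field_simp
  rw [Metric.tendsto_nhds]
  intro ε hε
  -- choose N
  have hpartial := hsum.tendsto_sum_nat
  have hNex : ∀ᶠ N in atTop, c - ∑ i ∈ range N, lam (i+1) < ε * d / 8 := by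
    have h : Tendsto (fun N => c - ∑ i ∈ range N, lam (i+1)) atTop (𝓝 0) := by
      simpa using (tendsto_const_nhds (x := c)).sub hpartial
    exact h.eventually (eventually_lt_nhds (by positivity))
  obtain ⟨N, hN2, hNtail⟩ :
      ∃ N, 2 ≤ N ∧ c - ∑ i ∈ range N, lam (i+1) < ε * d / 8 := by
    rcases ((eventually_ge_atTop 2).and hNex).exists with ⟨N, h1, h2⟩
    exact ⟨N, h1, h2⟩
  set P : ℝ := ∑ i ∈ range N, lam (i+1) with hP_def
  -- tail of lam tsum
  have htail_lam : ∑' i, lam (i + (N+1)) = c - P := by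
    have h := Summable.sum_add_tsum_nat_add (f := fun i => lam (i+1)) N hs1
    rw [hsum.tsum_eq] at h
    have e : (fun i : ℕ => lam (i + N + 1)) = fun i : ℕ => lam (i + (N+1)) := by
      funext i; congr 1 <;> omega
    rw [show (∑' i, lam (i + (N+1))) = ∑' i, lam (i + N + 1) by rw [e]]
    linarith
  have htail_lam_sum : Summable (fun i => lam (i + (N+1))) := by
    have h := (summable_nat_add_iff (f := fun i => lam (i+1)) N).mpr hs1
    apply h.congr
    intro i; congr 1 <;> omega
  have htail_nonneg : 0 ≤ c - P := by
    rw [← htail_lam]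
    exact tsum_nonneg fun i => (hlampos _ (by omega)).le
  -- tail of L : |L - ∑_{i<N-1} g i| ≤ ε/8
  have hgtail_sum : Summable (fun i => g (i + (N-1))) :=
    (summable_nat_add_iff (N-1)).mpr hgsum
  have hLtail : |L - ∑ i ∈ range (N-1), g i| ≤ ε / 8 := by
    have hLsplit : L - ∑ i ∈ range (N-1), g i = ∑' i, g (i + (N-1)) := by
      have := Summable.sum_add_tsum_nat_add (f := g) (N-1) hgsum
      rw [← hL_def] at this
      linarith
    rw [hLsplit]
    have habs : Summable (fun i => |g (i + (N-1))|) := hgtail_sum.abs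
    have h1 : |∑' i, g (i + (N-1))| ≤ ∑' i, |g (i + (N-1))| := by
      simpa [Real.norm_eq_abs] using
        norm_tsum_le_tsum_norm (f := fun i => g (i + (N-1)))
          (by simpa [Real.norm_eq_abs] using habs)
    have h2 : ∑' i, |g (i + (N-1))| ≤ ∑' i, lam (i + (N+1)) / d := by
      apply Summable.tsum_le_tsum _ habs (htail_lam_sum.div_const d)
      intro i
      have e : g (i + (N-1)) = Real.log (1 - lam (i + (N+1))) := by
        have e2 : i + (N-1) + 2 = i + (N+1) := by omega
        simp only [hg_def, e2]
      rw [e]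
      exact abs_log_le hd (hlampos _ (by omega)).le (hlamd _ (by omega))
    have h3 : ∑' i, lam (i + (N+1)) / d = (c - P) / d := by
      rw [tsum_div_const, htail_lam]
    have h4 : (c - P) / d ≤ ε / 8 := by
      rw [div_le_iff₀ hd]
      nlinarith
    linarith
  -- eventual estimate
  have hA : Tendsto (fun n => ∑ i ∈ Finset.Icc 2 N, Real.log (1 - (p n i : ℝ)/((n:ℝ)-1)))
      atTop (𝓝 (∑ i ∈ Finset.Icc 2 N, Real.log (1 - lam i))) := by
    apply tendsto_finset_sum
    intro i hi
    rw [Finset.mem_Icc] at hi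
    have h1 : (1:ℝ) - lam i ≠ 0 := by
      have := (hlam i (by omega)).2; intro h; linarith
    exact ((tendsto_const_nhds.sub (hx i (by omega))).log h1)
  have hAev : ∀ᶠ n in atTop,
      |(∑ i ∈ Finset.Icc 2 N, Real.log (1 - (p n i : ℝ)/((n:ℝ)-1))) -
        ∑ i ∈ Finset.Icc 2 N, Real.log (1 - lam i)| < ε / 4 := by
    have := Metric.tendsto_nhds.mp hA (ε/4) (by positivity)
    simpa [Real.dist_eq] using this
  -- partial-sum limit ∑_{i∈Icc 1 N} x n i → P
  have hPfin : Tendsto (fun n => ∑ i ∈ Finset.Icc 1 N, (p n i : ℝ)/((n:ℝ)-1))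
      atTop (𝓝 (∑ i ∈ Finset.Icc 1 N, lam i)) := by
    apply tendsto_finset_sum
    intro i hi
    rw [Finset.mem_Icc] at hi
    exact hx i hi.1
  have hPfin_eq : ∑ i ∈ Finset.Icc 1 N, lam i = P := by
    rw [hP_def, ← Finset.Ico_add_one_right_eq_Icc, Finset.sum_Ico_eq_sum_range]
    apply Finset.sum_congr (by congr 1 <;> omega)
    intro i _; congr 1 <;> omega
  have hD : Tendsto (fun n => (∑ i ∈ Finset.Icc 1 (q n), (p n i : ℝ)/((n:ℝ)-1)) -
      ∑ i ∈ Finset.Icc 1 N, (p n i : ℝ)/((n:ℝ)-1)) atTop (𝓝 (c - P)) := by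
    have h := hT.sub hPfin
    rwa [hPfin_eq] at h
  have hDev : ∀ᶠ n in atTop,
      (∑ i ∈ Finset.Icc 1 (q n), (p n i : ℝ)/((n:ℝ)-1)) -
        (∑ i ∈ Finset.Icc 1 N, (p n i : ℝ)/((n:ℝ)-1)) < ε * d / 4 := by
    apply hD.eventually (eventually_lt_nhds ?_)
    nlinarith [hNtail, hd, hε]
  have hx1ev : ∀ᶠ n in atTop, lam 1 / 2 ≤ (p n 1 : ℝ)/((n:ℝ)-1) := by
    have := (hx 1 le_rfl).eventually (eventually_gt_nhds (show lam 1/2 < lam 1 by linarith))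
    filter_upwards [this] with n hn
    exact hn.le
  -- final combination
  filter_upwards [hAev, hDev, hx1ev, hnp, hq.eventually_ge_atTop N,
    eventually_ge_atTop 2] with n hA' hD' hx1' hnp' hqN hn2
  have hn1R : (0:ℝ) < (n:ℝ) - 1 := by
    have : (2:ℝ) ≤ n := by exact_mod_cast hn2
    linarith
  -- bound x n i for i in Ioc 1 (q n)
  have hxle : ∀ i ∈ Finset.Ioc 1 (q n), (p n i : ℝ)/((n:ℝ)-1) ≤ 1 - d := by
    intro i hi
    rw [Finset.mem_Ioc] at hi
    have hsub' : ({1, i} : Finset ℕ) ⊆ Finset.Icc 1 (q n) := by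
      intro j hj
      simp only [Finset.mem_insert, Finset.mem_singleton] at hj
      rw [Finset.mem_Icc]
      rcases hj with rfl | rfl
      · omega
      · omega
    have hpair : p n 1 + p n i ≤ ∑ j ∈ Finset.Icc 1 (q n), p n j := by
      rw [← Finset.sum_pair (show (1:ℕ) ≠ i by omega)]
      exact Finset.sum_le_sum_of_subset hsub'
    have hle : p n 1 + p n i ≤ n - 2 := by omega
    have hleR : (p n 1 : ℝ) + p n i ≤ (n:ℝ) - 2 := by
      have h2n : 2 ≤ n := hn2
      have := (Nat.cast_le (α := ℝ)).mpr hle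
      push_cast at this
      have hcast : ((n - 2 : ℕ) : ℝ) = (n:ℝ) - 2 := by
        have : (2:ℕ) ≤ n := hn2
        push_cast [Nat.cast_sub this]
        ring
      rw [hcast] at this
      linarith
    rw [div_le_iff₀ hn1R]
    have hp1 : lam 1 / 2 * ((n:ℝ)-1) ≤ (p n 1 : ℝ) := by
      have h := (le_div_iff₀ hn1R).mp hx1'
      linarith
    nlinarith [hp1, hd1, hleR, hn1R, hd]
  have hxnonneg : ∀ i, (0:ℝ) ≤ (p n i : ℝ)/((n:ℝ)-1) := by
    intro i; positivity
  -- split the sum at N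
  have hsplit : ∑ i ∈ Finset.Icc 2 (q n), Real.log (1 - (p n i : ℝ)/((n:ℝ)-1)) =
      (∑ i ∈ Finset.Icc 2 N, Real.log (1 - (p n i : ℝ)/((n:ℝ)-1))) +
      ∑ i ∈ Finset.Ioc N (q n), Real.log (1 - (p n i : ℝ)/((n:ℝ)-1)) := by
    rw [show Finset.Icc 2 (q n) = Finset.Ioc 1 (q n) by rw [← Finset.Icc_add_one_left_eq_Ioc]; rfl,
        show Finset.Icc 2 N = Finset.Ioc 1 N by rw [← Finset.Icc_add_one_left_eq_Ioc]; rfl]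
    exact (Finset.sum_Ioc_consecutive _ (by omega) hqN).symm
  -- bound on tail B_n
  have hB : |∑ i ∈ Finset.Ioc N (q n), Real.log (1 - (p n i : ℝ)/((n:ℝ)-1))| < ε / 4 := by
    have h1 : |∑ i ∈ Finset.Ioc N (q n), Real.log (1 - (p n i : ℝ)/((n:ℝ)-1))| ≤
        ∑ i ∈ Finset.Ioc N (q n), |Real.log (1 - (p n i : ℝ)/((n:ℝ)-1))| :=
      Finset.abs_sum_le_sum_abs _ _
    have h2 : ∑ i ∈ Finset.Ioc N (q n), |Real.log (1 - (p n i : ℝ)/((n:ℝ)-1))| ≤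
        ∑ i ∈ Finset.Ioc N (q n), ((p n i : ℝ)/((n:ℝ)-1)) / d := by
      apply Finset.sum_le_sum
      intro i hi
      rw [Finset.mem_Ioc] at hi
      exact abs_log_le hd (hxnonneg i)
        (hxle i (by rw [Finset.mem_Ioc]; omega))
    have h3 : ∑ i ∈ Finset.Ioc N (q n), ((p n i : ℝ)/((n:ℝ)-1)) / d =
        (∑ i ∈ Finset.Ioc N (q n), (p n i : ℝ)/((n:ℝ)-1)) / d := by
      rw [Finset.sum_div]
    have h4 : ∑ i ∈ Finset.Ioc N (q n), (p n i : ℝ)/((n:ℝ)-1) =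
        (∑ i ∈ Finset.Icc 1 (q n), (p n i : ℝ)/((n:ℝ)-1)) -
          ∑ i ∈ Finset.Icc 1 N, (p n i : ℝ)/((n:ℝ)-1) := by
      rw [show Finset.Icc 1 (q n) = Finset.Ioc 0 (q n) by rw [← Finset.Icc_add_one_left_eq_Ioc]; rfl,
          show Finset.Icc 1 N = Finset.Ioc 0 N by rw [← Finset.Icc_add_one_left_eq_Ioc]; rfl]
      rw [← Finset.sum_Ioc_consecutive _ (Nat.zero_le N) hqN]
      ring
    have h5 : (∑ i ∈ Finset.Ioc N (q n), (p n i : ℝ)/((n:ℝ)-1)) / d < ε / 4 := by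
      rw [div_lt_iff₀ hd]
      have h7 : (∑ i ∈ Finset.Ioc N (q n), (p n i : ℝ)/((n:ℝ)-1)) < ε * d / 4 := by
        rw [h4]; exact hD'
      nlinarith
    calc |∑ i ∈ Finset.Ioc N (q n), Real.log (1 - (p n i : ℝ)/((n:ℝ)-1))|
        ≤ (∑ i ∈ Finset.Ioc N (q n), (p n i : ℝ)/((n:ℝ)-1)) / d := by
          rw [← h3]; exact le_trans h1 h2
      _ < ε / 4 := h5
  -- relate L partial to Icc 2 N sum
  have hLN : ∑ i ∈ range (N-1), g i = ∑ i ∈ Finset.Icc 2 N, Real.log (1 - lam i) := by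
    rw [← Finset.Ico_add_one_right_eq_Icc, Finset.sum_Ico_eq_sum_range]
    apply Finset.sum_congr (by congr 1 <;> omega)
    intro i _
    have e2 : 2 + i = i + 2 := by omega
    rw [e2]
  -- put everything together
  rw [Real.dist_eq, hsplit]
  have final : |(∑ i ∈ Finset.Icc 2 N, Real.log (1 - (p n i : ℝ)/((n:ℝ)-1))) +
      (∑ i ∈ Finset.Ioc N (q n), Real.log (1 - (p n i : ℝ)/((n:ℝ)-1))) - L| ≤
      |(∑ i ∈ Finset.Icc 2 N, Real.log (1 - (p n i : ℝ)/((n:ℝ)-1))) -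
        ∑ i ∈ Finset.Icc 2 N, Real.log (1 - lam i)| +
      |∑ i ∈ Finset.Ioc N (q n), Real.log (1 - (p n i : ℝ)/((n:ℝ)-1))| +
      |L - ∑ i ∈ range (N-1), g i| := by
    rw [hLN]
    set a := ∑ i ∈ Finset.Icc 2 N, Real.log (1 - (p n i : ℝ)/((n:ℝ)-1))
    set b := ∑ i ∈ Finset.Ioc N (q n), Real.log (1 - (p n i : ℝ)/((n:ℝ)-1))
    set e := ∑ i ∈ Finset.Icc 2 N, Real.log (1 - lam i)
    have : a + b - L = (a - e) + b + (e - L) := by ring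
    rw [this]
    calc |(a - e) + b + (e - L)| ≤ |(a - e) + b| + |e - L| := abs_add_le _ _
      _ ≤ |a - e| + |b| + |e - L| := by gcongr; exact abs_add_le _ _
      _ = |a - e| + |b| + |L - e| := by rw [abs_sub_comm e L]
  linarith [hA', hB, hLtail, final]
end
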